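/- arXiv:1912.08536 — 6 statements merged into one kernel-verified Lean document; each statement's English description precedes it below -/
import Mathlib

section
/- Let k, m, s be positive odd integers with 3 ≤ s ≤ m. Then there exists a signed magic rectangle SMR(m, km; ks, s). In particular, for every odd k ≥ 1 and odd m ≥ 3 there exists a signed magic rectangle SMR(m, km; 3k, 3). -/
/-- The set `X` of allowed entries of a signed magic rectangle with `m` rows and
`r` filled cells per row: `{0, ±1, …, ±(mr-1)/2}` if `mr` is odd, and
`{±1, …, ±(mr/2)}` if `mr` is even. -/
noncomputable def smrEntrySet (m r : ℕ) : Finset ℤ :=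
  if (m * r) % 2 = 1 then
    Finset.Icc (-(((m : ℤ) * r - 1) / 2)) (((m : ℤ) * r - 1) / 2)
  else
    (Finset.Icc (-((m : ℤ) * r / 2)) ((m : ℤ) * r / 2)).erase 0

/-- `A` is a signed magic rectangle `SMR(m, n; r, s)`: an `m × n` array with cells
either empty (`none`) or filled with an integer, having exactly `r` filled cells in
each row and `s` in each column, whose entries are exactly the elements of the set
`smrEntrySet m r`, each appearing exactly once, and all of whose row sums and column
sums are zero. -/
def IsSMR (m n r s : ℕ) (A : Fin m → Fin n → Option ℤ) : Prop :=
  (∀ i : Fin m, (Finset.univ.filter fun j : Fin n => A i j ≠ none).card = r) ∧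
  (∀ j : Fin n, (Finset.univ.filter fun i : Fin m => A i j ≠ none).card = s) ∧
  (∀ (i : Fin m) (j : Fin n) (x : ℤ), A i j = some x → x ∈ smrEntrySet m r) ∧
  (∀ x ∈ smrEntrySet m r, ∃! p : Fin m × Fin n, A p.1 p.2 = some x) ∧
  (∀ i : Fin m, ∑ j : Fin n, (A i j).getD 0 = 0) ∧
  (∀ j : Fin n, ∑ i : Fin m, (A i j).getD 0 = 0)

namespace SMRAux

/-- centered representative mod `2h+1`, lies in `[-h, h]`. -/
def cm (h : ℕ) (x : ℤ) : ℤ := (x + h) % (2 * h + 1) - h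

lemma mpos (h : ℕ) : (0:ℤ) < 2 * h + 1 := by positivity

lemma cm_lb (h : ℕ) (x : ℤ) : -(h:ℤ) ≤ cm h x := by
  have := Int.emod_nonneg (x + h) (by positivity : (2*(h:ℤ)+1) ≠ 0)
  unfold cm; omega

lemma cm_ub (h : ℕ) (x : ℤ) : cm h x ≤ h := by
  have := Int.emod_lt_of_pos (x + h) (mpos h)
  unfold cm; omega

lemma cm_emod (h : ℕ) (x : ℤ) : cm h x % (2*h+1) = x % (2*h+1) := by
  unfold cm
  conv_rhs => rw [show x = x + h - h by ring]
  rw [Int.sub_emod (x+h) (h:ℤ), Int.sub_emod ((x+h) % (2*h+1)) (h:ℤ),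
    Int.emod_emod_of_dvd _ dvd_rfl]

lemma cm_dvd_sub (h : ℕ) (x : ℤ) : (2*(h:ℤ)+1) ∣ (x - cm h x) := by
  have h1 := cm_emod h x
  have : (x - cm h x) % (2*(h:ℤ)+1) = 0 := by
    rw [Int.sub_emod, h1, sub_self, Int.zero_emod]
  exact Int.dvd_of_emod_eq_zero this

/-- if `m ∣ c` and `-2m < c < m` then `c = 0 ∨ c = -m`. -/
lemma dvd_small (m c : ℤ) (hm : 0 < m) (hd : m ∣ c) (h1 : -(2*m) < c) (h2 : c < m) :
    c = 0 ∨ c = -m := by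
  rcases le_or_gt 0 c with h | h
  · left; exact Int.eq_zero_of_abs_lt_dvd hd (by rwa [abs_of_nonneg h])
  · right
    have hdm : m ∣ c + m := hd.add ⟨1, by ring⟩
    have : c + m = 0 := Int.eq_zero_of_abs_lt_dvd hdm (by rw [abs_lt]; omega)
    omega

lemma eq_of_dvd_small (m a b : ℤ) (hm : 0 < m) (hd : m ∣ (a - b)) (h1 : -m < a - b)
    (h2 : a - b < m) : a = b := by
  have := Int.eq_zero_of_abs_lt_dvd hd (by rw [abs_lt]; omega)
  omega

lemma cm_eq_self (h : ℕ) (x : ℤ) (h1 : -(h:ℤ) ≤ x) (h2 : x ≤ h) : cm h x = x := by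
  unfold cm
  rw [Int.emod_eq_of_lt (by omega) (by omega)]; ring

lemma cm_congr (h : ℕ) {x y : ℤ} (hxy : (2*(h:ℤ)+1) ∣ (x - y)) : cm h x = cm h y := by
  refine eq_of_dvd_small (2*h+1) _ _ (mpos h) ?_ ?_ ?_
  · have d1 := cm_dvd_sub h x
    have d2 := cm_dvd_sub h y
    have : cm h x - cm h y = (x - y) - (x - cm h x) + (y - cm h y) := by ring
    rw [this]; exact ((hxy.sub d1).add d2)
  · have := cm_lb h x; have := cm_ub h y; omega
  · have := cm_ub h x; have := cm_lb h y; omega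

def fg (h : ℕ) (x : ℤ) : ℤ := cm h ((h+1) * x)

/-- The key identity: `fg h x + fg h (x-1) = cm h (x + h)`. -/
lemma fg_add (h : ℕ) (x : ℤ) : fg h x + fg h (x - 1) = cm h (x + h) := by
  set a := cm h ((h+1) * x) with ha
  set b := cm h ((h+1) * (x-1)) with hb
  have la := cm_lb h ((h+1) * x); rw [← ha] at la
  have ua := cm_ub h ((h+1) * x); rw [← ha] at ua
  have lb := cm_lb h ((h+1) * (x-1)); rw [← hb] at lb
  have ub := cm_ub h ((h+1) * (x-1)); rw [← hb] at ub
  have da := cm_dvd_sub h ((h+1) * x)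
  have db := cm_dvd_sub h ((h+1) * (x-1))
  rw [← ha] at da; rw [← hb] at db
  -- a - b ≡ h+1  (mod 2h+1)
  have hdab : (2*(h:ℤ)+1) ∣ (a - b - (h+1)) := by
    have : a - b - (h+1) = ((h+1)*(x-1) - b) - ((h+1)*x - a) := by ring
    rw [this]; exact db.sub da
  have hc := dvd_small (2*h+1) (a - b - (h+1)) (mpos h) hdab (by omega) (by omega)
  -- bound for the sum
  have hbound : -(h:ℤ) ≤ a + b ∧ a + b ≤ h := by rcases hc with hc | hc <;> constructor <;> omega
  -- congruence for the sum
  have hcong : (2*(h:ℤ)+1) ∣ ((x + h) - (a + b)) := by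
    have : (x + h) - (a + b) = ((h+1)*x - a) + ((h+1)*(x-1) - b) - (2*h+1)*(x - 1) := by ring
    rw [this]; exact (da.add db).sub ⟨x - 1, rfl⟩
  have : cm h (x + h) = a + b := by
    rw [cm_congr h (show (2*(h:ℤ)+1) ∣ ((x+h) - (a+b)) from hcong)]
    exact cm_eq_self h _ hbound.1 hbound.2
  show a + b = cm h (x + h)
  omega

/-- `g` is (up to sign) a centered affine bijection mod `2h+1`. -/
def IsAff (h : ℕ) (g : ℤ → ℤ) : Prop :=
  ∃ a e ε a' : ℤ, (ε = 1 ∨ ε = -1) ∧ (2*(h:ℤ)+1) ∣ (a' * a - 1) ∧ ∀ i, g i = ε * cm h (a * i + e)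

lemma IsAff.bound {h : ℕ} {g : ℤ → ℤ} (hg : IsAff h g) (i : ℤ) :
    -(h:ℤ) ≤ g i ∧ g i ≤ h := by
  obtain ⟨a, e, ε, a', hε, _, hgi⟩ := hg
  have l := cm_lb h (a * i + e); have u := cm_ub h (a * i + e)
  rw [hgi i]; rcases hε with h1 | h1 <;> subst h1 <;> constructor <;> nlinarith

lemma IsAff.congr {h : ℕ} {g : ℤ → ℤ} (hg : IsAff h g) {i i' : ℤ}
    (hii : (2*(h:ℤ)+1) ∣ (i - i')) : g i = g i' := by
  obtain ⟨a, e, ε, a', hε, _, hgi⟩ := hg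
  rw [hgi i, hgi i']
  congr 1
  refine cm_congr h ?_
  have heq : (a*i+e) - (a*i'+e) = a * (i - i') := by ring
  rw [heq]; exact hii.mul_left a

lemma IsAff.inj {h : ℕ} {g : ℤ → ℤ} (hg : IsAff h g) {i i' : ℤ}
    (hv : g i = g i') : (2*(h:ℤ)+1) ∣ (i - i') := by
  obtain ⟨a, e, ε, a', hε, ha', hgi⟩ := hg
  rw [hgi i, hgi i'] at hv
  have hcm : cm h (a * i + e) = cm h (a * i' + e) := by
    rcases hε with h1 | h1 <;> subst h1 <;> [exact (by linarith); exact (by linarith)]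
  have hd : (2*(h:ℤ)+1) ∣ ((a*i+e) - (a*i'+e)) := by
    have d1 := cm_dvd_sub h (a*i+e)
    have d2 := cm_dvd_sub h (a*i'+e)
    have heq : (a*i+e) - (a*i'+e)
        = ((a*i+e) - cm h (a*i+e)) - ((a*i'+e) - cm h (a*i'+e)) := by
      rw [hcm]; ring
    rw [heq]; exact d1.sub d2
  have hd2 : (2*(h:ℤ)+1) ∣ (a * (i - i')) := by
    have : a * (i - i') = (a*i+e) - (a*i'+e) := by ring
    rw [this]; exact hd
  -- multiply by a'
  obtain ⟨w, hw⟩ := ha'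
  have heq2 : i - i' = a' * (a * (i - i')) - (2*(h:ℤ)+1) * (w * (i - i')) := by
    linear_combination (i' - i) * hw
  rw [heq2]
  exact (hd2.mul_left a').sub ⟨w * (i - i'), rfl⟩

lemma IsAff.solve {h : ℕ} {g : ℤ → ℤ} (hg : IsAff h g) (y : ℤ)
    (h1 : -(h:ℤ) ≤ y) (h2 : y ≤ h) : ∃ i : ℤ, 0 ≤ i ∧ i < 2*h+1 ∧ g i = y := by
  obtain ⟨a, e, ε, a', hε, ha', hgi⟩ := hg
  refine ⟨(a' * (ε * y - e)) % (2*(h:ℤ)+1),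
    Int.emod_nonneg _ (by positivity), Int.emod_lt_of_pos _ (mpos h), ?_⟩
  set i := (a' * (ε * y - e)) % (2*(h:ℤ)+1) with hi
  have him : (2*(h:ℤ)+1) ∣ (a' * (ε * y - e) - i) := by
    rw [hi, Int.dvd_iff_emod_eq_zero, Int.sub_emod, Int.emod_emod_of_dvd _ dvd_rfl,
      sub_self, Int.zero_emod]
  obtain ⟨w, hw⟩ := ha'
  have hcong : (2*(h:ℤ)+1) ∣ ((a * i + e) - ε * y) := by
    have key : (a * i + e) - ε * y
        = -(a * (a' * (ε*y - e) - i)) + (2*(h:ℤ)+1) * (w * (ε * y - e)) := by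
      linear_combination (ε * y - e) * hw
    rw [key]
    exact (dvd_neg.mpr (him.mul_left a)).add ⟨w * (ε*y - e), rfl⟩
  rw [hgi i, cm_congr h hcong]
  rcases hε with h3 | h3 <;> subst h3
  · rw [cm_eq_self h _ (by linarith) (by linarith)]; ring
  · rw [cm_eq_self h _ (by linarith) (by linarith)]; ring

/-! ### The diagonal value functions -/

def quadP (h : ℕ) (e : ℕ) (i : ℤ) : ℤ :=
  if e = 0 then cm h i else if e = 1 then -cm h (i+1) else if e = 2 then -cm h i else cm h (i+1)

def P (hm hs : ℕ) (d : ℕ) (i : ℤ) : ℤ :=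
  if hs % 2 = 1 then
    if d = 0 then fg hm (i-1) else if d = 1 then -cm hm (i+hm) else if d = 2 then fg hm i
    else quadP hm ((d-3) % 4) i
  else
    if d = 0 then -cm hm (i+hm) else if d = 1 then fg hm (i-1) else if d = 2 then cm hm (i+hm+2)
    else if d = 3 then fg hm i else if d = 4 then -cm hm (i+hm+2)
    else quadP hm ((d-5) % 4) i

def Q (hk : ℕ) (d : ℕ) (t : ℤ) : ℤ :=
  if d = 0 then fg hk t else if d = 1 then fg hk (t-1) else if d = 2 then -cm hk (t+hk)
  else if (d-3) % 2 = 0 then cm hk t else -cm hk t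

lemma isAff_cm (h : ℕ) (c : ℤ) : IsAff h (fun i => cm h (i + c)) :=
  ⟨1, c, 1, 1, Or.inl rfl, ⟨0, by ring⟩, fun i => by simp⟩

lemma isAff_neg_cm (h : ℕ) (c : ℤ) : IsAff h (fun i => -cm h (i + c)) :=
  ⟨1, c, -1, 1, Or.inr rfl, ⟨0, by ring⟩, fun i => by simp⟩

lemma isAff_fg (h : ℕ) (c : ℤ) : IsAff h (fun i => fg h (i + c)) :=
  ⟨(h:ℤ)+1, ((h:ℤ)+1) * c, 1, 2, Or.inl rfl, ⟨1, by ring⟩,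
    fun i => by simp [fg]; congr 1; ring⟩

lemma quadP_isAff (h : ℕ) (e : ℕ) : IsAff h (quadP h e) := by
  unfold quadP
  split_ifs
  · simpa using isAff_cm h 0
  · simpa using isAff_neg_cm h 1
  · simpa using isAff_neg_cm h 0
  · simpa using isAff_cm h 1

lemma IsAff.ext {h : ℕ} {g g' : ℤ → ℤ} (hg : IsAff h g) (he : ∀ i, g' i = g i) :
    IsAff h g' := by
  obtain ⟨a, e, ε, a', h1, h2, h3⟩ := hg
  exact ⟨a, e, ε, a', h1, h2, fun i => (he i).trans (h3 i)⟩

lemma P_isAff (hm hs : ℕ) (d : ℕ) : IsAff hm (P hm hs d) := by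
  have c2 : IsAff hm (fun i : ℤ => cm hm (i + hm + 2)) :=
    (isAff_cm hm ((hm:ℤ)+2)).ext (fun i => by
      rw [show i + (hm:ℤ) + 2 = i + ((hm:ℤ)+2) from by ring])
  have c2n : IsAff hm (fun i : ℤ => -cm hm (i + hm + 2)) :=
    (isAff_neg_cm hm ((hm:ℤ)+2)).ext (fun i => by
      rw [show i + (hm:ℤ) + 2 = i + ((hm:ℤ)+2) from by ring])
  unfold P
  split_ifs
  all_goals first
    | exact (isAff_fg hm (-1)).ext (fun i => by simp only [sub_eq_add_neg])
    | (simpa using isAff_neg_cm hm hm)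
    | (simpa using isAff_fg hm 0)
    | exact c2
    | exact c2n
    | exact quadP_isAff hm _

lemma Q_isAff (hk hs : ℕ) (d : ℕ) : IsAff hk (Q hk d) := by
  unfold Q
  split_ifs
  all_goals first
    | (simpa using isAff_fg hk 0)
    | exact (isAff_fg hk (-1)).ext (fun i => by simp only [sub_eq_add_neg])
    | (simpa using isAff_neg_cm hk hk)
    | (simpa using isAff_cm hk 0)
    | (simpa using isAff_neg_cm hk 0)

/-! ### Sum helpers -/

lemma sum_range_four_mul (n : ℕ) (F : ℕ → ℤ)
    (h : ∀ b, F (4*b) + F (4*b+1) + F (4*b+2) + F (4*b+3) = 0) :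
    ∑ d ∈ Finset.range (4*n), F d = 0 := by
  induction n with
  | zero => simp
  | succ n ih =>
    have : 4*(n+1) = (4*n+1)+1+1+1 := by ring
    rw [this, Finset.sum_range_succ, Finset.sum_range_succ, Finset.sum_range_succ,
      Finset.sum_range_succ, ih]
    have := h n
    omega

lemma sum_range_two_mul (n : ℕ) (F : ℕ → ℤ)
    (h : ∀ b, F (2*b) + F (2*b+1) = 0) :
    ∑ d ∈ Finset.range (2*n), F d = 0 := by
  induction n with
  | zero => simp
  | succ n ih =>
    have : 2*(n+1) = (2*n+1)+1 := by ring
    rw [this, Finset.sum_range_succ, Finset.sum_range_succ, ih]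
    have := h n
    omega

lemma sum_centered (hs : ℕ) : ∑ d ∈ Finset.range (2*hs+1), ((d:ℤ) - hs) = 0 := by
  apply Finset.sum_involution (fun d _ => 2*hs - d)
  · intro d hd
    simp only [Finset.mem_range] at hd
    have : ((2*hs - d : ℕ) : ℤ) = 2*(hs:ℤ) - d := by
      have : d ≤ 2*hs := by omega
      push_cast [this]; ring
    rw [this]; ring
  · intro d hd hne
    simp only [Finset.mem_range] at hd
    intro hc
    apply hne
    have : d = hs := by omega
    rw [this]; ring
  · intro d hd
    simp only [Finset.mem_range] at hd ⊢
    omega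
  · intro d hd
    simp only [Finset.mem_range] at hd
    omega

lemma sum_Icc_cent (h : ℕ) : ∑ x ∈ Finset.Icc (-(h:ℤ)) (h:ℤ), x = 0 := by
  apply Finset.sum_involution (fun a _ => -a)
  · intro a _; ring
  · intro a _ hne
    intro hc
    apply hne
    omega
  · intro a ha
    first
      | exact neg_neg a
      | (simp only [Finset.mem_Icc] at ha ⊢; omega)
  · intro a ha
    first
      | exact neg_neg a
      | (simp only [Finset.mem_Icc] at ha ⊢; omega)

lemma IsAff.sum_range {h : ℕ} {g : ℤ → ℤ} (hg : IsAff h g) :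
    ∑ t ∈ Finset.range (2*h+1), g (t:ℤ) = 0 := by
  rw [← sum_Icc_cent h]
  apply Finset.sum_bij (fun (t : ℕ) _ => g (t:ℤ))
  · intro t _
    have := hg.bound (t:ℤ)
    simp only [Finset.mem_Icc]; omega
  · intro t ht t' ht' hv
    simp only [Finset.mem_range] at ht ht'
    have hd := hg.inj hv
    have : (t:ℤ) = t' := eq_of_dvd_small _ _ _ (mpos h) hd (by omega) (by omega)
    omega
  · intro y hy
    simp only [Finset.mem_Icc] at hy
    obtain ⟨i, hi0, hilt, hival⟩ := hg.solve y hy.1 hy.2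
    refine ⟨i.toNat, by simp only [Finset.mem_range]; omega, ?_⟩
    rw [Int.toNat_of_nonneg hi0, hival]
  · intro t _; rfl

/-! ### Row and column identities for P and Q -/

lemma P_row (hm hs : ℕ) (h1 : 1 ≤ hs) (i : ℤ) :
    ∑ d ∈ Finset.range (2*hs+1), P hm hs d i = 0 := by
  have hquad : ∀ x : ℤ, quadP hm 0 x + quadP hm 1 x + quadP hm 2 x + quadP hm 3 x = 0 := by
    intro x; unfold quadP; norm_num
  rcases Nat.lt_or_ge (hs % 2) 1 with hp | hp
  · -- hs even, hs ≥ 2, 5-kernel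
    have hp0 : hs % 2 = 0 := by omega
    have hp1 : ¬ (hs % 2 = 1) := by omega
    have hr : 2*hs+1 = 5 + 4*((hs-2)/2) := by omega
    rw [hr, Finset.sum_range_add]
    have hker : ∑ x ∈ Finset.range 5, P hm hs x i = 0 := by
      have := fg_add hm i
      simp only [Finset.sum_range_succ, Finset.sum_range_zero, P, hp1]
      norm_num
      linarith
    have htail : ∑ x ∈ Finset.range (4*((hs-2)/2)), P hm hs (5+x) i = 0 := by
      apply sum_range_four_mul
      intro b
      have hPx : ∀ x : ℕ, P hm hs (5+x) i = quadP hm (x % 4) i := by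
        intro x
        unfold P
        rw [if_neg hp1, if_neg (by omega), if_neg (by omega), if_neg (by omega),
          if_neg (by omega), if_neg (by omega)]
        congr 1; omega
      rw [hPx, hPx, hPx, hPx]
      rw [show (4*b) % 4 = 0 from by omega, show (4*b+1) % 4 = 1 from by omega,
        show (4*b+2) % 4 = 2 from by omega, show (4*b+3) % 4 = 3 from by omega]
      exact hquad i
    rw [hker, htail, add_zero]
  · -- hs odd, 3-kernel
    have hp1 : hs % 2 = 1 := by omega
    have hr : 2*hs+1 = 3 + 4*((hs-1)/2) := by omega
    rw [hr, Finset.sum_range_add]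
    have hker : ∑ x ∈ Finset.range 3, P hm hs x i = 0 := by
      have := fg_add hm i
      simp only [Finset.sum_range_succ, Finset.sum_range_zero, P, hp1]
      norm_num
      linarith
    have htail : ∑ x ∈ Finset.range (4*((hs-1)/2)), P hm hs (3+x) i = 0 := by
      apply sum_range_four_mul
      intro b
      have hPx : ∀ x : ℕ, P hm hs (3+x) i = quadP hm (x % 4) i := by
        intro x
        unfold P
        rw [if_pos hp1, if_neg (by omega), if_neg (by omega), if_neg (by omega)]
        congr 1; omega
      rw [hPx, hPx, hPx, hPx]
      rw [show (4*b) % 4 = 0 from by omega, show (4*b+1) % 4 = 1 from by omega,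
        show (4*b+2) % 4 = 2 from by omega, show (4*b+3) % 4 = 3 from by omega]
      exact hquad i
    rw [hker, htail, add_zero]

lemma quad_skew (hm : ℕ) (c : ℕ) (z : ℤ) :
    quadP hm 0 (z - (c:ℤ)) + quadP hm 1 (z - ((c:ℤ)+1)) + quadP hm 2 (z - ((c:ℤ)+2))
      + quadP hm 3 (z - ((c:ℤ)+3)) = 0 := by
  unfold quadP
  norm_num
  rw [show z - ((c:ℤ)+1) + 1 = z - c from by ring, show z - ((c:ℤ)+3) + 1 = z - ((c:ℤ)+2) from by ring]
  ring

lemma P_col (hm hs : ℕ) (h1 : 1 ≤ hs) (z : ℤ) :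
    ∑ d ∈ Finset.range (2*hs+1), P hm hs d (z - (d:ℤ)) = 0 := by
  rcases Nat.lt_or_ge (hs % 2) 1 with hp | hp
  · have hp1 : ¬ (hs % 2 = 1) := by omega
    have hr : 2*hs+1 = 5 + 4*((hs-2)/2) := by omega
    rw [hr, Finset.sum_range_add]
    have hker : ∑ x ∈ Finset.range 5, P hm hs x (z - (x:ℤ)) = 0 := by
      simp only [Finset.sum_range_succ, Finset.sum_range_zero, P, hp1]
      norm_num
      have key := fg_add hm (z-2)
      rw [show z-2-1 = z-3 from by ring] at key
      rw [show z - 1 - 1 = z - 2 from by ring, show z-2+(hm:ℤ)+2 = z + hm from by ring,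
        show z-4+(hm:ℤ)+2 = z-2+hm from by ring]
      linarith
    have htail : ∑ x ∈ Finset.range (4*((hs-2)/2)), P hm hs (5+x) (z - ((5+x : ℕ):ℤ)) = 0 := by
      apply sum_range_four_mul
      intro b
      have hPx : ∀ x : ℕ, ∀ w : ℤ, P hm hs (5+x) w = quadP hm (x % 4) w := by
        intro x w
        unfold P
        rw [if_neg hp1, if_neg (by omega), if_neg (by omega), if_neg (by omega),
          if_neg (by omega), if_neg (by omega)]
        congr 1; omega
      rw [hPx, hPx, hPx, hPx]
      rw [show (4*b) % 4 = 0 from by omega, show (4*b+1) % 4 = 1 from by omega,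
        show (4*b+2) % 4 = 2 from by omega, show (4*b+3) % 4 = 3 from by omega]
      have := quad_skew hm (5+4*b) z
      push_cast at this ⊢
      rw [show z - (5 + (4*(b:ℤ)+1)) = z - ((5+4*(b:ℤ))+1) from by ring,
        show z - (5 + (4*(b:ℤ)+2)) = z - ((5+4*(b:ℤ))+2) from by ring,
        show z - (5 + (4*(b:ℤ)+3)) = z - ((5+4*(b:ℤ))+3) from by ring]
      convert this using 3 <;> ring
    rw [hker, htail, add_zero]
  · have hp1 : hs % 2 = 1 := by omega
    have hr : 2*hs+1 = 3 + 4*((hs-1)/2) := by omega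
    rw [hr, Finset.sum_range_add]
    have hker : ∑ x ∈ Finset.range 3, P hm hs x (z - (x:ℤ)) = 0 := by
      simp only [Finset.sum_range_succ, Finset.sum_range_zero, P, hp1]
      norm_num
      have key := fg_add hm (z-1)
      rw [show z-1-1 = z-2 from by ring, show z-1+(hm:ℤ) = z+hm-1 from by ring] at key
      rw [show z-1+(hm:ℤ) = z+hm-1 from by ring]
      linarith
    have htail : ∑ x ∈ Finset.range (4*((hs-1)/2)), P hm hs (3+x) (z - ((3+x : ℕ):ℤ)) = 0 := by
      apply sum_range_four_mul
      intro b
      have hPx : ∀ x : ℕ, ∀ w : ℤ, P hm hs (3+x) w = quadP hm (x % 4) w := by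
        intro x w
        unfold P
        rw [if_pos hp1, if_neg (by omega), if_neg (by omega), if_neg (by omega)]
        congr 1; omega
      rw [hPx, hPx, hPx, hPx]
      rw [show (4*b) % 4 = 0 from by omega, show (4*b+1) % 4 = 1 from by omega,
        show (4*b+2) % 4 = 2 from by omega, show (4*b+3) % 4 = 3 from by omega]
      have := quad_skew hm (3+4*b) z
      push_cast at this ⊢
      rw [show z - (3 + (4*(b:ℤ)+1)) = z - ((3+4*(b:ℤ))+1) from by ring,
        show z - (3 + (4*(b:ℤ)+2)) = z - ((3+4*(b:ℤ))+2) from by ring,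
        show z - (3 + (4*(b:ℤ)+3)) = z - ((3+4*(b:ℤ))+3) from by ring]
      convert this using 3 <;> ring
    rw [hker, htail, add_zero]

lemma Q_row (hk hs : ℕ) (h1 : 1 ≤ hs) (t : ℤ) :
    ∑ d ∈ Finset.range (2*hs+1), Q hk d t = 0 := by
  have hr : 2*hs+1 = 3 + 2*(hs-1) := by omega
  rw [hr, Finset.sum_range_add]
  have hker : ∑ x ∈ Finset.range 3, Q hk x t = 0 := by
    simp only [Finset.sum_range_succ, Finset.sum_range_zero, Q]
    norm_num
    have := fg_add hk t
    linarith
  have htail : ∑ x ∈ Finset.range (2*(hs-1)), Q hk (3+x) t = 0 := by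
    apply sum_range_two_mul
    intro b
    have hQx : ∀ x : ℕ, Q hk (3+x) t = if x % 2 = 0 then cm hk t else -cm hk t := by
      intro x
      unfold Q
      rw [if_neg (by omega), if_neg (by omega), if_neg (by omega)]
      congr 2; omega
    rw [hQx, hQx]
    rw [show (2*b) % 2 = 0 from by omega, show (2*b+1) % 2 = 1 from by omega]
    norm_num
  rw [hker, htail, add_zero]

/-! ### Natural-number modular lemmas -/

lemma mod1 (m i v : ℕ) (hi : i < m) (hv : v < m) : (i + (v + m - i) % m) % m = v := by
  rcases Nat.lt_or_ge v i with h | h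
  · -- v < i : v + m - i < m
    have h1 : (v + m - i) % m = v + m - i := Nat.mod_eq_of_lt (by omega)
    rw [h1, show i + (v + m - i) = v + m from by omega, Nat.add_mod_right]
    exact Nat.mod_eq_of_lt hv
  · -- i ≤ v : wraps
    have h1 : (v + m - i) % m = v - i := by
      rw [Nat.mod_eq_sub_mod (by omega), show v + m - i - m = v - i from by omega]
      exact Nat.mod_eq_of_lt (by omega)
    rw [h1, show i + (v - i) = v from by omega]
    exact Nat.mod_eq_of_lt hv

lemma mod2 (m i d : ℕ) (hi : i < m) (hd : d < m) : ((i + d) % m + m - i) % m = d := by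
  rcases Nat.lt_or_ge (i + d) m with h | h
  · rw [Nat.mod_eq_of_lt h, show i + d + m - i = d + m from by omega, Nat.add_mod_right]
    exact Nat.mod_eq_of_lt hd
  · have h1 : (i + d) % m = i + d - m := by
      rw [Nat.mod_eq_sub_mod h]
      exact Nat.mod_eq_of_lt (by omega)
    rw [h1, show i + d - m + m - i = d from by omega]
    exact Nat.mod_eq_of_lt hd

lemma mod3 (m u d : ℕ) (hu : u < m) (hd : d < m) : (u + m - (u + m - d) % m) % m = d := by
  rcases Nat.lt_or_ge u d with h | h
  · -- u < d : u + m - d < m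
    have h1 : (u + m - d) % m = u + m - d := Nat.mod_eq_of_lt (by omega)
    rw [h1, show u + m - (u + m - d) = d from by omega]
    exact Nat.mod_eq_of_lt hd
  · have h1 : (u + m - d) % m = u - d := by
      rw [Nat.mod_eq_sub_mod (by omega), show u + m - d - m = u - d from by omega]
      exact Nat.mod_eq_of_lt (by omega)
    rw [h1, show u + m - (u - d) = d + m from by omega, Nat.add_mod_right]
    exact Nat.mod_eq_of_lt hd

/-! ### Sum reindexing -/

lemma sum_range_mul {M : Type*} [AddCommMonoid M] (k m : ℕ) (F : ℕ → M) :
    ∑ j ∈ Finset.range (k*m), F j = ∑ t ∈ Finset.range k, ∑ v ∈ Finset.range m, F (v + m*t) := by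
  induction k with
  | zero => simp
  | succ k ih =>
    rw [show (k+1)*m = k*m + m from by ring, Finset.sum_range_add, ih, Finset.sum_range_succ]
    congr 1
    apply Finset.sum_congr rfl
    intro v _
    congr 1
    ring

lemma sum_shift_mod {M : Type*} [AddCommMonoid M] (m u : ℕ) (hu : u < m) (G : ℕ → M) :
    ∑ v ∈ Finset.range m, G ((v + m - u) % m) = ∑ d ∈ Finset.range m, G d := by
  apply Finset.sum_nbij' (fun v => (v + m - u) % m) (fun d => (u + d) % m)
  · intro v hv
    simp only [Finset.mem_range] at hv ⊢
    exact Nat.mod_lt _ (by omega)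
  · intro d hd
    simp only [Finset.mem_range] at hd ⊢
    exact Nat.mod_lt _ (by omega)
  · intro v hv
    simp only [Finset.mem_range] at hv
    exact mod1 m u v hu hv
  · intro d hd
    simp only [Finset.mem_range] at hd
    exact mod2 m u d hu hd
  · intro v _
    rfl

lemma sum_reflect_mod {M : Type*} [AddCommMonoid M] (m u : ℕ) (hu : u < m) (G : ℕ → M) :
    ∑ i ∈ Finset.range m, G ((u + m - i) % m) = ∑ d ∈ Finset.range m, G d := by
  apply Finset.sum_nbij' (fun i => (u + m - i) % m) (fun d => (u + m - d) % m)
  · intro v hv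
    simp only [Finset.mem_range] at hv ⊢
    exact Nat.mod_lt _ (by omega)
  · intro d hd
    simp only [Finset.mem_range] at hd ⊢
    exact Nat.mod_lt _ (by omega)
  · intro v hv
    simp only [Finset.mem_range] at hv
    exact mod3 m u v hu hv
  · intro d hd
    simp only [Finset.mem_range] at hd
    exact mod3 m u d hu hd
  · intro v _
    rfl

lemma ite_sum_lt {M : Type*} [AddCommMonoid M] (s m : ℕ) (hsm : s ≤ m) (W : ℕ → M) :
    ∑ d ∈ Finset.range m, (if d < s then W d else 0) = ∑ d ∈ Finset.range s, W d := by
  rw [← Finset.sum_filter]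
  congr 1
  ext d
  simp only [Finset.mem_filter, Finset.mem_range]
  omega

/-! ### The array -/

def Dd (m i j : ℕ) : ℕ := (j % m + m - i) % m

def Vf (hk hm hs : ℕ) (i j : ℕ) : ℤ :=
  ((2*hk+1)*(2*hm+1) : ℤ) * ((Dd (2*hm+1) i j : ℤ) - hs)
    + (2*hk+1) * P hm hs (Dd (2*hm+1) i j) (i:ℤ)
    + Q hk (Dd (2*hm+1) i j) ((j / (2*hm+1) : ℕ) : ℤ)

def Arr (hk hm hs : ℕ) : Fin (2*hm+1) → Fin ((2*hk+1)*(2*hm+1)) → Option ℤ :=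
  fun i j => if Dd (2*hm+1) (i:ℕ) (j:ℕ) < 2*hs+1 then some (Vf hk hm hs i j) else none

lemma row_card (hk hm hs : ℕ) (hsm : hs ≤ hm) (i : Fin (2*hm+1)) :
    (Finset.univ.filter fun j : Fin ((2*hk+1)*(2*hm+1)) => Arr hk hm hs i j ≠ none).card
      = (2*hk+1)*(2*hs+1) := by
  have hm0 : 0 < 2*hm+1 := by omega
  have hrw : (Finset.univ.filter fun j : Fin ((2*hk+1)*(2*hm+1)) => Arr hk hm hs i j ≠ none)
      = Finset.univ.filter fun j : Fin ((2*hk+1)*(2*hm+1)) =>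
          Dd (2*hm+1) (i:ℕ) (j:ℕ) < 2*hs+1 := by
    apply Finset.filter_congr
    intro j _
    unfold Arr
    split_ifs with h <;> simp [h]
  rw [hrw, Finset.card_filter]
  rw [Fin.sum_univ_eq_sum_range (fun jn => if Dd (2*hm+1) (i:ℕ) jn < 2*hs+1 then 1 else 0)]
  rw [sum_range_mul]
  have hsh := sum_shift_mod (2*hm+1) (i:ℕ) i.isLt (fun d => if d < 2*hs+1 then (1:ℕ) else 0)
  have hil := ite_sum_lt (2*hs+1) (2*hm+1) (by omega) (fun _ => (1:ℕ))
  have hinner : ∀ t ∈ Finset.range (2*hk+1),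
      (∑ v ∈ Finset.range (2*hm+1),
        (if Dd (2*hm+1) (i:ℕ) (v + (2*hm+1)*t) < 2*hs+1 then 1 else 0)) = 2*hs+1 := by
    intro t _
    have hc : ∀ v ∈ Finset.range (2*hm+1),
        (if Dd (2*hm+1) (i:ℕ) (v + (2*hm+1)*t) < 2*hs+1 then 1 else 0)
          = (if (v + (2*hm+1) - (i:ℕ)) % (2*hm+1) < 2*hs+1 then 1 else 0) := by
      intro v hv
      simp only [Finset.mem_range] at hv
      unfold Dd
      rw [Nat.add_mul_mod_self_left, Nat.mod_eq_of_lt hv]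
    rw [Finset.sum_congr rfl hc, hsh, hil]
    simp
  rw [Finset.sum_congr rfl hinner, Finset.sum_const, Finset.card_range, smul_eq_mul]

lemma col_card (hk hm hs : ℕ) (hsm : hs ≤ hm) (j : Fin ((2*hk+1)*(2*hm+1))) :
    (Finset.univ.filter fun i : Fin (2*hm+1) => Arr hk hm hs i j ≠ none).card = 2*hs+1 := by
  have hm0 : 0 < 2*hm+1 := by omega
  have hu : (j:ℕ) % (2*hm+1) < 2*hm+1 := Nat.mod_lt _ hm0
  have hrw : (Finset.univ.filter fun i : Fin (2*hm+1) => Arr hk hm hs i j ≠ none)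
      = Finset.univ.filter fun i : Fin (2*hm+1) =>
          Dd (2*hm+1) (i:ℕ) (j:ℕ) < 2*hs+1 := by
    apply Finset.filter_congr
    intro i _
    unfold Arr
    split_ifs with h <;> simp [h]
  rw [hrw, Finset.card_filter]
  rw [Fin.sum_univ_eq_sum_range (fun iN => if Dd (2*hm+1) iN (j:ℕ) < 2*hs+1 then 1 else 0)]
  unfold Dd
  have hrf := sum_reflect_mod (2*hm+1) ((j:ℕ) % (2*hm+1)) hu
    (fun d => if d < 2*hs+1 then (1:ℕ) else 0)
  have hil := ite_sum_lt (2*hs+1) (2*hm+1) (by omega) (fun _ => (1:ℕ))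
  rw [hrf, hil]
  simp

lemma row_sum (hk hm hs : ℕ) (h1 : 1 ≤ hs) (hsm : hs ≤ hm) (i : Fin (2*hm+1)) :
    ∑ j : Fin ((2*hk+1)*(2*hm+1)), (Arr hk hm hs i j).getD 0 = 0 := by
  have hm0 : 0 < 2*hm+1 := by omega
  have hgd : ∀ j : Fin ((2*hk+1)*(2*hm+1)), (Arr hk hm hs i j).getD 0
      = if Dd (2*hm+1) (i:ℕ) (j:ℕ) < 2*hs+1 then Vf hk hm hs (i:ℕ) (j:ℕ) else 0 := by
    intro j; unfold Arr; split_ifs <;> simp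
  rw [Finset.sum_congr rfl (fun j _ => hgd j)]
  rw [Fin.sum_univ_eq_sum_range
    (fun jn => if Dd (2*hm+1) (i:ℕ) jn < 2*hs+1 then Vf hk hm hs (i:ℕ) jn else 0)]
  rw [sum_range_mul]
  have hinner : ∀ t ∈ Finset.range (2*hk+1),
      (∑ v ∈ Finset.range (2*hm+1),
        (if Dd (2*hm+1) (i:ℕ) (v + (2*hm+1)*t) < 2*hs+1
          then Vf hk hm hs (i:ℕ) (v + (2*hm+1)*t) else 0)) = 0 := by
    intro t _
    have hsh := sum_shift_mod (2*hm+1) (i:ℕ) i.isLt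
      (fun d => if d < 2*hs+1 then
        ((2*hk+1)*(2*hm+1) : ℤ) * ((d:ℤ) - hs)
          + (2*hk+1) * P hm hs d ((i:ℕ):ℤ) + Q hk d (t:ℤ) else 0)
    have hil := ite_sum_lt (2*hs+1) (2*hm+1) (by omega)
      (fun d => ((2*hk+1)*(2*hm+1) : ℤ) * ((d:ℤ) - hs)
          + (2*hk+1) * P hm hs d ((i:ℕ):ℤ) + Q hk d (t:ℤ))
    have hstep : ∀ v ∈ Finset.range (2*hm+1),
        (if Dd (2*hm+1) (i:ℕ) (v + (2*hm+1)*t) < 2*hs+1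
          then Vf hk hm hs (i:ℕ) (v + (2*hm+1)*t) else 0)
        = (if (v + (2*hm+1) - (i:ℕ)) % (2*hm+1) < 2*hs+1 then
            ((2*hk+1)*(2*hm+1) : ℤ) * (((v + (2*hm+1) - (i:ℕ)) % (2*hm+1) : ℕ) - (hs:ℤ))
              + (2*hk+1) * P hm hs ((v + (2*hm+1) - (i:ℕ)) % (2*hm+1)) ((i:ℕ):ℤ)
              + Q hk ((v + (2*hm+1) - (i:ℕ)) % (2*hm+1)) (t:ℤ) else 0) := by
      intro v hv
      simp only [Finset.mem_range] at hv
      have hDd : Dd (2*hm+1) (i:ℕ) (v + (2*hm+1)*t) = (v + (2*hm+1) - (i:ℕ)) % (2*hm+1) := by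
        unfold Dd
        rw [Nat.add_mul_mod_self_left, Nat.mod_eq_of_lt hv]
      have hdiv : (v + (2*hm+1)*t) / (2*hm+1) = t := by
        rw [Nat.add_mul_div_left _ _ hm0, Nat.div_eq_of_lt hv, zero_add]
      unfold Vf
      rw [hDd, hdiv]
    rw [Finset.sum_congr rfl hstep, hsh, hil]
    rw [Finset.sum_add_distrib, Finset.sum_add_distrib, ← Finset.mul_sum, ← Finset.mul_sum]
    rw [sum_centered, P_row hm hs h1, Q_row hk hs h1]
    ring
  rw [Finset.sum_congr rfl hinner]
  simp

lemma col_sum (hk hm hs : ℕ) (h1 : 1 ≤ hs) (hsm : hs ≤ hm) (j : Fin ((2*hk+1)*(2*hm+1))) :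
    ∑ i : Fin (2*hm+1), (Arr hk hm hs i j).getD 0 = 0 := by
  have hm0 : 0 < 2*hm+1 := by omega
  have hu : (j:ℕ) % (2*hm+1) < 2*hm+1 := Nat.mod_lt _ hm0
  have hgd : ∀ i : Fin (2*hm+1), (Arr hk hm hs i j).getD 0
      = if Dd (2*hm+1) (i:ℕ) (j:ℕ) < 2*hs+1 then Vf hk hm hs (i:ℕ) (j:ℕ) else 0 := by
    intro i; unfold Arr; split_ifs <;> simp
  rw [Finset.sum_congr rfl (fun i _ => hgd i)]
  rw [Fin.sum_univ_eq_sum_range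
    (fun iN => if Dd (2*hm+1) iN (j:ℕ) < 2*hs+1 then Vf hk hm hs iN (j:ℕ) else 0)]
  have hrf := sum_reflect_mod (2*hm+1) ((j:ℕ) % (2*hm+1)) hu
    (fun d => if d < 2*hs+1 then
        ((2*hk+1)*(2*hm+1) : ℤ) * ((d:ℤ) - hs)
          + (2*hk+1) * P hm hs d ((((j:ℕ) % (2*hm+1) : ℕ)):ℤ) - (2*hk+1) * P hm hs d 0
          + (2*hk+1) * P hm hs d 0
          + Q hk d (((j:ℕ) / (2*hm+1) : ℕ):ℤ) else 0)
  clear hrf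
  have hrf := sum_reflect_mod (2*hm+1) ((j:ℕ) % (2*hm+1)) hu
    (fun d => if d < 2*hs+1 then
        ((2*hk+1)*(2*hm+1) : ℤ) * ((d:ℤ) - hs)
          + (2*hk+1) * P hm hs d ((((j:ℕ) % (2*hm+1)) : ℤ) - (d:ℤ))
          + Q hk d (((j:ℕ) / (2*hm+1) : ℕ):ℤ) else 0)
  have hil := ite_sum_lt (2*hs+1) (2*hm+1) (by omega)
    (fun d => ((2*hk+1)*(2*hm+1) : ℤ) * ((d:ℤ) - hs)
          + (2*hk+1) * P hm hs d ((((j:ℕ) % (2*hm+1)) : ℤ) - (d:ℤ))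
          + Q hk d (((j:ℕ) / (2*hm+1) : ℕ):ℤ))
  have hstep : ∀ iN ∈ Finset.range (2*hm+1),
      (if Dd (2*hm+1) iN (j:ℕ) < 2*hs+1 then Vf hk hm hs iN (j:ℕ) else 0)
      = (if ((j:ℕ) % (2*hm+1) + (2*hm+1) - iN) % (2*hm+1) < 2*hs+1 then
          ((2*hk+1)*(2*hm+1) : ℤ)
              * ((((((j:ℕ) % (2*hm+1) + (2*hm+1) - iN) % (2*hm+1)) : ℕ) : ℤ) - (hs:ℤ))
            + (2*hk+1) * P hm hs (((j:ℕ) % (2*hm+1) + (2*hm+1) - iN) % (2*hm+1))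
                ((((j:ℕ) % (2*hm+1)) : ℤ) - ((((j:ℕ) % (2*hm+1) + (2*hm+1) - iN) % (2*hm+1) : ℕ) : ℤ))
            + Q hk (((j:ℕ) % (2*hm+1) + (2*hm+1) - iN) % (2*hm+1)) (((j:ℕ) / (2*hm+1) : ℕ):ℤ)
          else 0) := by
    intro iN hiN
    simp only [Finset.mem_range] at hiN
    have hPcongr : P hm hs (((j:ℕ) % (2*hm+1) + (2*hm+1) - iN) % (2*hm+1)) ((iN:ℕ):ℤ)
        = P hm hs (((j:ℕ) % (2*hm+1) + (2*hm+1) - iN) % (2*hm+1))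
            ((((j:ℕ) % (2*hm+1)) : ℤ) - ((((j:ℕ) % (2*hm+1) + (2*hm+1) - iN) % (2*hm+1) : ℕ) : ℤ)) := by
      apply (P_isAff hm hs _).congr
      have hdm := Nat.div_add_mod ((j:ℕ) % (2*hm+1) + (2*hm+1) - iN) (2*hm+1)
      set q : ℕ := ((j:ℕ) % (2*hm+1) + (2*hm+1) - iN) / (2*hm+1) with hqdef
      set r : ℕ := ((j:ℕ) % (2*hm+1) + (2*hm+1) - iN) % (2*hm+1) with hrdef
      have hsum : iN + (2*hm+1) * q + r = (j:ℕ) % (2*hm+1) + (2*hm+1) := by omega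
      refine ⟨1 - q, ?_⟩
      have hz : ((iN:ℤ)) + (2*hm+1) * (q:ℤ) + (r:ℤ)
          = (((j:ℕ) % (2*hm+1) : ℕ):ℤ) + (2*hm+1) := by exact_mod_cast congrArg (Nat.cast : ℕ → ℤ) hsum
      linarith [hz]
    unfold Vf Dd
    rw [hPcongr]
  rw [Finset.sum_congr rfl hstep, hrf, hil]
  rw [Finset.sum_add_distrib, Finset.sum_add_distrib, ← Finset.mul_sum, ← Finset.mul_sum]
  rw [sum_centered, P_col hm hs h1, Q_row hk hs h1]
  ring

/-! ### Entry set and value bounds -/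

lemma entry_eq (hk hm hs : ℕ) :
    smrEntrySet (2*hm+1) ((2*hk+1)*(2*hs+1))
      = Finset.Icc (-(((2*hk+1)*(2*hm+1)*hs + (2*hk+1)*hm + hk : ℕ) : ℤ))
          (((2*hk+1)*(2*hm+1)*hs + (2*hk+1)*hm + hk : ℕ) : ℤ) := by
  have hodd : (2*hm+1) * ((2*hk+1)*(2*hs+1))
      = 2*((2*hk+1)*(2*hm+1)*hs + (2*hk+1)*hm + hk) + 1 := by ring
  unfold smrEntrySet
  rw [if_pos (by omega)]
  have hcast : ((2*hm+1 : ℕ) : ℤ) * (((2*hk+1)*(2*hs+1) : ℕ) : ℤ)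
      = 2*(((2*hk+1)*(2*hm+1)*hs + (2*hk+1)*hm + hk : ℕ) : ℤ) + 1 := by
    push_cast
    ring
  rw [hcast]
  norm_num

lemma Vf_mem (hk hm hs : ℕ) (i j : ℕ) (hd : Dd (2*hm+1) i j < 2*hs+1) :
    Vf hk hm hs i j ∈ Finset.Icc
      (-(((2*hk+1)*(2*hm+1)*hs + (2*hk+1)*hm + hk : ℕ) : ℤ))
      (((2*hk+1)*(2*hm+1)*hs + (2*hk+1)*hm + hk : ℕ) : ℤ) := by
  have hP := (P_isAff hm hs (Dd (2*hm+1) i j)).bound (i:ℤ)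
  have hQ := (Q_isAff hk hs (Dd (2*hm+1) i j)).bound ((j / (2*hm+1) : ℕ) : ℤ)
  have hdZ1 : -(hs:ℤ) ≤ (Dd (2*hm+1) i j : ℤ) - hs := by
    have : (0:ℤ) ≤ (Dd (2*hm+1) i j : ℤ) := Int.natCast_nonneg _
    linarith
  have hdZ2 : (Dd (2*hm+1) i j : ℤ) - hs ≤ hs := by
    have : (Dd (2*hm+1) i j : ℤ) ≤ 2*hs := by exact_mod_cast Nat.lt_succ_iff.mp (by omega)
    linarith
  have hKM : (0:ℤ) ≤ (2*(hk:ℤ)+1)*(2*(hm:ℤ)+1) := by positivity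
  have hK : (0:ℤ) ≤ 2*(hk:ℤ)+1 := by positivity
  have b1u : ((2*hk+1)*(2*hm+1) : ℤ) * ((Dd (2*hm+1) i j : ℤ) - hs)
      ≤ ((2*hk+1)*(2*hm+1) : ℤ) * hs := by
    apply mul_le_mul_of_nonneg_left hdZ2
    push_cast
    positivity
  have b1l : ((2*hk+1)*(2*hm+1) : ℤ) * (-(hs:ℤ))
      ≤ ((2*hk+1)*(2*hm+1) : ℤ) * ((Dd (2*hm+1) i j : ℤ) - hs) := by
    apply mul_le_mul_of_nonneg_left hdZ1
    push_cast
    positivity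
  have b2u : ((2*hk+1) : ℤ) * P hm hs (Dd (2*hm+1) i j) (i:ℤ) ≤ ((2*hk+1) : ℤ) * hm := by
    apply mul_le_mul_of_nonneg_left hP.2
    push_cast
    positivity
  have b2l : ((2*hk+1) : ℤ) * (-(hm:ℤ)) ≤ ((2*hk+1) : ℤ) * P hm hs (Dd (2*hm+1) i j) (i:ℤ) := by
    apply mul_le_mul_of_nonneg_left hP.1
    push_cast
    positivity
  rw [Finset.mem_Icc]
  have hE : (((2*hk+1)*(2*hm+1)*hs + (2*hk+1)*hm + hk : ℕ) : ℤ)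
      = ((2*hk+1)*(2*hm+1) : ℤ)*hs + ((2*hk+1) : ℤ)*hm + hk := by push_cast; ring
  rw [hE]
  unfold Vf
  constructor <;> linarith [hQ.1, hQ.2, b1u, b1l, b2u, b2l]

/-- uniqueness of the base-`(2hk+1)(2hm+1)` digit decomposition -/
lemma decomp_eq (hk hm hs : ℕ) {δ β γ δ' β' γ' : ℤ}
    (hδ1 : -(hs:ℤ) ≤ δ) (hδ2 : δ ≤ hs) (hβ1 : -(hm:ℤ) ≤ β) (hβ2 : β ≤ hm)
    (hγ1 : -(hk:ℤ) ≤ γ) (hγ2 : γ ≤ hk)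
    (hδ1' : -(hs:ℤ) ≤ δ') (hδ2' : δ' ≤ hs) (hβ1' : -(hm:ℤ) ≤ β') (hβ2' : β' ≤ hm)
    (hγ1' : -(hk:ℤ) ≤ γ') (hγ2' : γ' ≤ hk)
    (heq : ((2*hk+1)*(2*hm+1) : ℤ)*δ + (2*hk+1)*β + γ
      = ((2*hk+1)*(2*hm+1) : ℤ)*δ' + (2*hk+1)*β' + γ') :
    δ = δ' ∧ β = β' ∧ γ = γ' := by
  have hK : (0:ℤ) < 2*(hk:ℤ)+1 := by positivity
  have hM : (0:ℤ) < 2*(hm:ℤ)+1 := by positivity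
  have hγ : γ = γ' := by
    have hdvd : (2*(hk:ℤ)+1) ∣ (γ - γ') :=
      ⟨(2*(hm:ℤ)+1)*(δ'-δ) + (β'-β), by linear_combination heq⟩
    have := Int.eq_zero_of_abs_lt_dvd hdvd (by rw [abs_lt]; constructor <;> linarith)
    linarith
  have hMβ : (2*(hm:ℤ)+1)*δ + β = (2*(hm:ℤ)+1)*δ' + β' := by
    have h2 : (2*(hk:ℤ)+1) * ((2*(hm:ℤ)+1)*δ + β) = (2*(hk:ℤ)+1) * ((2*(hm:ℤ)+1)*δ' + β') := by
      linear_combination heq - hγ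
    exact mul_left_cancel₀ (by positivity) h2
  have hβ : β = β' := by
    have hdvd : (2*(hm:ℤ)+1) ∣ (β - β') := ⟨δ' - δ, by linear_combination hMβ⟩
    have := Int.eq_zero_of_abs_lt_dvd hdvd (by rw [abs_lt]; constructor <;> linarith)
    linarith
  have hδ : δ = δ' := by
    have h2 : (2*(hm:ℤ)+1) * δ = (2*(hm:ℤ)+1) * δ' := by linear_combination hMβ - hβ
    exact mul_left_cancel₀ (by positivity) h2
  exact ⟨hδ, hβ, hγ⟩

lemma mem_of_eq (hk hm hs : ℕ) (i : Fin (2*hm+1)) (j : Fin ((2*hk+1)*(2*hm+1))) (x : ℤ)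
    (hx : Arr hk hm hs i j = some x) :
    x ∈ Finset.Icc (-(((2*hk+1)*(2*hm+1)*hs + (2*hk+1)*hm + hk : ℕ) : ℤ))
      (((2*hk+1)*(2*hm+1)*hs + (2*hk+1)*hm + hk : ℕ) : ℤ) := by
  unfold Arr at hx
  by_cases hc : Dd (2*hm+1) (i:ℕ) (j:ℕ) < 2*hs+1
  · rw [if_pos hc] at hx
    rw [← Option.some.inj hx]
    exact Vf_mem hk hm hs i j hc
  · rw [if_neg hc] at hx
    exact absurd hx (by simp)

lemma exists_unique_cell (hk hm hs : ℕ) (h1 : 1 ≤ hs) (hsm : hs ≤ hm) (x : ℤ)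
    (hx : x ∈ Finset.Icc (-(((2*hk+1)*(2*hm+1)*hs + (2*hk+1)*hm + hk : ℕ) : ℤ))
      (((2*hk+1)*(2*hm+1)*hs + (2*hk+1)*hm + hk : ℕ) : ℤ)) :
    ∃! p : Fin (2*hm+1) × Fin ((2*hk+1)*(2*hm+1)), Arr hk hm hs p.1 p.2 = some x := by
  have hm0 : 0 < 2*hm+1 := by omega
  have hk0 : 0 < 2*hk+1 := by omega
  have hKM0 : 0 < (2*hk+1)*(2*hm+1) := by positivity
  rw [Finset.mem_Icc] at hx
  have hE : (((2*hk+1)*(2*hm+1)*hs + (2*hk+1)*hm + hk : ℕ) : ℤ)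
      = ((2*hk+1)*(2*hm+1) : ℤ)*hs + ((2*hk+1) : ℤ)*hm + hk := by push_cast; ring
  have hx0 : 0 ≤ x + (((2*hk+1)*(2*hm+1)*hs + (2*hk+1)*hm + hk : ℕ) : ℤ) := by linarith [hx.1]
  set n : ℕ := (x + (((2*hk+1)*(2*hm+1)*hs + (2*hk+1)*hm + hk : ℕ) : ℤ)).toNat with hndef
  have hncast : (n:ℤ) = x + (((2*hk+1)*(2*hm+1)*hs + (2*hk+1)*hm + hk : ℕ) : ℤ) :=
    Int.toNat_of_nonneg hx0
  have hnlt : n < (2*hk+1)*(2*hm+1)*(2*hs+1) := by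
    have hc : ((n:ℤ)) < (((2*hk+1)*(2*hm+1)*(2*hs+1) : ℕ) : ℤ) := by
      have hprod : (((2*hk+1)*(2*hm+1)*(2*hs+1) : ℕ) : ℤ)
          = 2*(((2*hk+1)*(2*hm+1)*hs + (2*hk+1)*hm + hk : ℕ) : ℤ) + 1 := by push_cast; ring
      rw [hprod]
      linarith [hx.2, hncast]
    exact_mod_cast hc
  obtain ⟨dN, hdNdef⟩ : ∃ dN : ℕ, dN = n / ((2*hk+1)*(2*hm+1)) := ⟨_, rfl⟩
  obtain ⟨rN, hrNdef⟩ : ∃ rN : ℕ, rN = n % ((2*hk+1)*(2*hm+1)) := ⟨_, rfl⟩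
  obtain ⟨bN, hbNdef⟩ : ∃ bN : ℕ, bN = rN / (2*hk+1) := ⟨_, rfl⟩
  obtain ⟨cN, hcNdef⟩ : ∃ cN : ℕ, cN = rN % (2*hk+1) := ⟨_, rfl⟩
  have hdlt : dN < 2*hs+1 := by
    rw [hdNdef]
    rw [Nat.div_lt_iff_lt_mul hKM0]
    rw [show (2*hs+1) * ((2*hk+1)*(2*hm+1)) = (2*hk+1)*(2*hm+1)*(2*hs+1) from by ring]
    exact hnlt
  have hr1 : (2*hk+1)*(2*hm+1) * dN + rN = n := by
    rw [hdNdef, hrNdef]; exact Nat.div_add_mod n _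
  have hr2 : (2*hk+1) * bN + cN = rN := by
    rw [hbNdef, hcNdef]; exact Nat.div_add_mod rN _
  have hrlt : rN < (2*hk+1)*(2*hm+1) := by
    rw [hrNdef]; exact Nat.mod_lt _ hKM0
  have hblt : bN < 2*hm+1 := by
    rw [hbNdef, Nat.div_lt_iff_lt_mul hk0]
    rw [show (2*hm+1) * (2*hk+1) = (2*hk+1)*(2*hm+1) from by ring]
    exact hrlt
  have hclt : cN < 2*hk+1 := by
    rw [hcNdef]; exact Nat.mod_lt _ hk0
  obtain ⟨iZ, hi0, hilt, hiv⟩ := (P_isAff hm hs dN).solve ((bN:ℤ) - hm) (by omega) (by omega)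
  obtain ⟨iN, hiNdef⟩ : ∃ iN : ℕ, iN = iZ.toNat := ⟨_, rfl⟩
  have hicast : (iN:ℤ) = iZ := by rw [hiNdef]; exact Int.toNat_of_nonneg hi0
  have hiNlt : iN < 2*hm+1 := by omega
  obtain ⟨tZ, ht0, htlt, htv⟩ := (Q_isAff hk hs dN).solve ((cN:ℤ) - hk) (by omega) (by omega)
  obtain ⟨tN, htNdef⟩ : ∃ tN : ℕ, tN = tZ.toNat := ⟨_, rfl⟩
  have htcast : (tN:ℤ) = tZ := by rw [htNdef]; exact Int.toNat_of_nonneg ht0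
  have htNlt : tN < 2*hk+1 := by omega
  obtain ⟨uN, huNdef⟩ : ∃ uN : ℕ, uN = (iN + dN) % (2*hm+1) := ⟨_, rfl⟩
  have hult : uN < 2*hm+1 := by rw [huNdef]; exact Nat.mod_lt _ hm0
  obtain ⟨jN, hjNdef⟩ : ∃ jN : ℕ, jN = uN + (2*hm+1) * tN := ⟨_, rfl⟩
  have hjlt : jN < (2*hk+1)*(2*hm+1) := by
    rw [hjNdef]
    calc uN + (2*hm+1)*tN < (2*hm+1) + (2*hm+1)*tN := by omega
      _ = (2*hm+1)*(tN+1) := by ring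
      _ ≤ (2*hm+1)*(2*hk+1) := Nat.mul_le_mul_left _ (by omega)
      _ = (2*hk+1)*(2*hm+1) := by ring
  have hjmod : jN % (2*hm+1) = uN := by
    rw [hjNdef]
    have h := Nat.add_mul_mod_self_left uN (2*hm+1) tN
    rw [Nat.mod_eq_of_lt hult] at h
    exact h
  have hjdiv : jN / (2*hm+1) = tN := by
    rw [hjNdef, Nat.add_mul_div_left _ _ hm0, Nat.div_eq_of_lt hult, zero_add]
  have hDdj : Dd (2*hm+1) iN jN = dN := by
    unfold Dd
    rw [hjmod, huNdef]
    exact mod2 _ iN dN hiNlt (by omega)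
  have hval : Vf hk hm hs iN jN = x := by
    unfold Vf
    rw [hDdj, hjdiv, hicast, htcast, hiv, htv]
    have c1 : ((2*hk+1)*(2*hm+1) : ℤ) * dN + rN = n := by
      exact_mod_cast congrArg (Nat.cast : ℕ → ℤ) hr1
    have c2 : ((2*hk+1) : ℤ) * bN + cN = rN := by
      exact_mod_cast congrArg (Nat.cast : ℕ → ℤ) hr2
    rw [hE] at hncast
    linear_combination c1 + c2 + hncast
  refine ⟨(⟨iN, hiNlt⟩, ⟨jN, hjlt⟩), ?_, ?_⟩
  · show Arr hk hm hs ⟨iN, hiNlt⟩ ⟨jN, hjlt⟩ = some x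
    show (if Dd (2*hm+1) iN jN < 2*hs+1 then some (Vf hk hm hs iN jN) else none) = some x
    rw [if_pos (show Dd (2*hm+1) iN jN < 2*hs+1 from by rw [hDdj]; omega), hval]
  · rintro ⟨p1, p2⟩ hp
    have hp2 : (if Dd (2*hm+1) (p1:ℕ) (p2:ℕ) < 2*hs+1
        then some (Vf hk hm hs (p1:ℕ) (p2:ℕ)) else none) = some x := hp
    by_cases hc : Dd (2*hm+1) (p1:ℕ) (p2:ℕ) < 2*hs+1
    swap
    · rw [if_neg hc] at hp2
      exact absurd hp2 (by simp)
    rw [if_pos hc] at hp2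
    have hvx : Vf hk hm hs (p1:ℕ) (p2:ℕ) = x := Option.some.inj hp2
    have heq' : Vf hk hm hs (p1:ℕ) (p2:ℕ) = Vf hk hm hs iN jN := hvx.trans hval.symm
    unfold Vf at heq'
    rw [hDdj, hjdiv] at heq'
    have hPb := (P_isAff hm hs (Dd (2*hm+1) (p1:ℕ) (p2:ℕ))).bound ((p1:ℕ):ℤ)
    have hQb := (Q_isAff hk hs (Dd (2*hm+1) (p1:ℕ) (p2:ℕ))).bound ((((p2:ℕ)/(2*hm+1)) : ℕ):ℤ)
    have hPb2 := (P_isAff hm hs dN).bound ((iN:ℕ):ℤ)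
    have hQb2 := (Q_isAff hk hs dN).bound ((tN:ℕ):ℤ)
    have hdd0 : (0:ℤ) ≤ (Dd (2*hm+1) (p1:ℕ) (p2:ℕ) : ℤ) := Int.natCast_nonneg _
    have hddlt : (Dd (2*hm+1) (p1:ℕ) (p2:ℕ) : ℤ) ≤ 2*hs := by exact_mod_cast Nat.lt_succ_iff.mp (by omega)
    have hdn0 : (0:ℤ) ≤ (dN:ℤ) := Int.natCast_nonneg _
    have hdnlt : (dN:ℤ) ≤ 2*hs := by exact_mod_cast Nat.lt_succ_iff.mp (by omega)
    obtain ⟨hδ, hβ, hγ⟩ := decomp_eq hk hm hs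
      (by linarith) (by linarith) hPb.1 hPb.2 hQb.1 hQb.2
      (by linarith) (by linarith) hPb2.1 hPb2.2 hQb2.1 hQb2.2 heq'
    have hdd : Dd (2*hm+1) (p1:ℕ) (p2:ℕ) = dN := by
      have : (Dd (2*hm+1) (p1:ℕ) (p2:ℕ) : ℤ) = (dN:ℤ) := by linarith
      exact_mod_cast this
    rw [hdd] at hβ hγ
    -- p1 = iN
    have hdvd1 := (P_isAff hm hs dN).inj hβ
    have hp1Z : ((p1:ℕ):ℤ) = (iN:ℤ) := by
      refine eq_of_dvd_small _ _ _ (mpos hm) hdvd1 ?_ ?_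
      · have := p1.isLt
        omega
      · have := p1.isLt
        omega
    have hp1 : (p1:ℕ) = iN := by exact_mod_cast hp1Z
    -- p2/m = tN
    have hdvd2 := (Q_isAff hk hs dN).inj hγ
    have htlt' : (p2:ℕ)/(2*hm+1) < 2*hk+1 := by
      rw [Nat.div_lt_iff_lt_mul hm0]
      exact p2.isLt
    have ht2Z : (((p2:ℕ)/(2*hm+1) : ℕ):ℤ) = (tN:ℤ) := by
      have ha1 : (0:ℤ) ≤ (((p2:ℕ)/(2*hm+1) : ℕ):ℤ) := Int.natCast_nonneg _
      have ha2 : (((p2:ℕ)/(2*hm+1) : ℕ):ℤ) ≤ 2*hk := by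
        exact_mod_cast (show (p2:ℕ)/(2*hm+1) ≤ 2*hk by omega)
      have hb1 : (0:ℤ) ≤ (tN:ℤ) := Int.natCast_nonneg _
      have hb2 : (tN:ℤ) ≤ 2*hk := by exact_mod_cast (show tN ≤ 2*hk by omega)
      exact eq_of_dvd_small (2*(hk:ℤ)+1) _ _ (mpos hk) hdvd2 (by linarith) (by linarith)
    have ht2 : (p2:ℕ)/(2*hm+1) = tN := by exact_mod_cast ht2Z
    -- p2 % m = uN
    have hmod := mod1 (2*hm+1) (p1:ℕ) ((p2:ℕ) % (2*hm+1)) p1.isLt (Nat.mod_lt _ hm0)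
    have hu2 : (p2:ℕ) % (2*hm+1) = uN := by
      have : Dd (2*hm+1) (p1:ℕ) (p2:ℕ) = ((p2:ℕ) % (2*hm+1) + (2*hm+1) - (p1:ℕ)) % (2*hm+1) := rfl
      rw [this] at hdd
      rw [← hmod, hdd, hp1, ← huNdef]
    -- p2 = jN
    have hdm := Nat.div_add_mod (p2:ℕ) (2*hm+1)
    rw [ht2, hu2] at hdm
    have hp2' : (p2:ℕ) = jN := by
      rw [← hdm, hjNdef]
      exact Nat.add_comm _ _
    exact Prod.ext (Fin.ext hp1) (Fin.ext hp2')

end SMRAux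

/-- For positive odd integers `k, m, s` with `3 ≤ s ≤ m` there exists a signed magic
rectangle `SMR(m, km; ks, s)`; in particular, for every odd `k ≥ 1` and odd `m ≥ 3`
there exists an `SMR(m, km; 3k, 3)`. -/
theorem smr_m_km_ks_s :
    (∀ k m s : ℕ, 0 < k → Odd k → Odd m → Odd s → 3 ≤ s → s ≤ m →
      ∃ A : Fin m → Fin (k * m) → Option ℤ, IsSMR m (k * m) (k * s) s A) ∧
    (∀ k m : ℕ, 0 < k → Odd k → Odd m → 3 ≤ m →
      ∃ A : Fin m → Fin (k * m) → Option ℤ, IsSMR m (k * m) (3 * k) 3 A) := by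
  have main : ∀ k m s : ℕ, 0 < k → Odd k → Odd m → Odd s → 3 ≤ s → s ≤ m →
      ∃ A : Fin m → Fin (k * m) → Option ℤ, IsSMR m (k * m) (k * s) s A := by
    intro k m s hk0 hok hom hos h3s hsm
    obtain ⟨hk', hck⟩ := hok
    obtain ⟨hm', hcm⟩ := hom
    obtain ⟨hs', hcs⟩ := hos
    have hkk : k = 2*hk'+1 := by omega
    have hmm : m = 2*hm'+1 := by omega
    have hss : s = 2*hs'+1 := by omega
    subst hkk hmm hss
    have h1 : 1 ≤ hs' := by omega
    have hsm' : hs' ≤ hm' := by omega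
    refine ⟨SMRAux.Arr hk' hm' hs', ?_, ?_, ?_, ?_, ?_, ?_⟩
    · exact fun i => SMRAux.row_card hk' hm' hs' hsm' i
    · exact fun j => SMRAux.col_card hk' hm' hs' hsm' j
    · intro i j x hx
      rw [SMRAux.entry_eq hk' hm' hs']
      exact SMRAux.mem_of_eq hk' hm' hs' i j x hx
    · intro x hx
      rw [SMRAux.entry_eq hk' hm' hs'] at hx
      exact SMRAux.exists_unique_cell hk' hm' hs' h1 hsm' x hx
    · exact fun i => SMRAux.row_sum hk' hm' hs' h1 hsm' i
    · exact fun j => SMRAux.col_sum hk' hm' hs' h1 hsm' j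
  refine ⟨main, ?_⟩
  intro k m hk0 hok hom h3m
  have h := main k m 3 hk0 hok hom ⟨1, by omega⟩ (le_refl 3) h3m
  rwa [show k*3 = 3*k from Nat.mul_comm k 3] at h
end

section
/- For every even positive integer n there exists a signed magic rectangle SMR(3,n) with the additional property that each row is closed under negation: whenever an integer x appears in a row, −x also appears in that same row. -/
/-! ### Auxiliary definitions for the construction -/

/-- Successor with wraparound on `{0, …, n-1}`. -/
def smrWr (n j : ℕ) : ℕ := if j + 1 = n then 0 else j + 1

/-- Pairing involution on column indices: an even index is paired with the
preceding index (cyclically), an odd index with the following one. -/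
def smrG (n j : ℕ) : ℕ :=
  if j % 2 = 0 then (if j = 0 then n - 1 else j - 1) else (if j + 1 = n then 0 else j + 1)

/-- The entry of the array in row `i` (`i = 0, 1, 2`), column `j`, built from a
cyclic sequence `y`. -/
def smrF (n : ℕ) (y : ℕ → ℤ) (i j : ℕ) : ℤ :=
  if i = 0 then y (smrWr n j) - y j
  else if i = 1 then (if j % 2 = 0 then y j else -y (smrWr n j))
  else (if j % 2 = 0 then -y (smrWr n j) else y j)

lemma smrWr_lt {n j : ℕ} (hn : 0 < n) (hj : j < n) : smrWr n j < n := by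
  unfold smrWr; split <;> omega

lemma smrWr_inj {n a b : ℕ} (ha : a < n) (hb : b < n) (h : smrWr n a = smrWr n b) : a = b := by
  unfold smrWr at h; split_ifs at h <;> omega

lemma smrG_lt {n j : ℕ} (hn : 0 < n) (hj : j < n) : smrG n j < n := by
  unfold smrG; split_ifs <;> first | contradiction | omega

lemma smrG_parity {n j : ℕ} (h2 : n % 2 = 0) (hj : j < n) : smrG n j % 2 = (j + 1) % 2 := by
  unfold smrG; split_ifs <;> first | contradiction | omega

lemma smrG_invol {n j : ℕ} (h2 : n % 2 = 0) (hj : j < n) : smrG n (smrG n j) = j := by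
  unfold smrG; split_ifs <;> first | contradiction | omega

lemma smrWr_smrG {n j : ℕ} (h2 : n % 2 = 0) (hj : j < n) (hp : j % 2 = 0) :
    smrWr n (smrG n j) = j := by
  unfold smrWr smrG; split_ifs <;> first | contradiction | omega

lemma smrG_eq_smrWr {n j : ℕ} (hp : j % 2 = 1) : smrG n j = smrWr n j := by
  unfold smrG smrWr; split_ifs <;> first | contradiction | omega


/-- Pairing involution for the third row: an even index is paired with the following
index (cyclically), an odd index with the preceding one. -/
def smrH (n j : ℕ) : ℕ :=
  if j % 2 = 0 then (if j + 1 = n then 0 else j + 1) else (if j = 0 then n - 1 else j - 1)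

lemma smrH_lt {n j : ℕ} (hn : 0 < n) (hj : j < n) : smrH n j < n := by
  unfold smrH; split_ifs <;> omega

lemma smrH_parity {n j : ℕ} (h2 : n % 2 = 0) (hj : j < n) : smrH n j % 2 = (j + 1) % 2 := by
  unfold smrH; split_ifs <;> first | contradiction | omega

lemma smrH_invol {n j : ℕ} (h2 : n % 2 = 0) (hj : j < n) : smrH n (smrH n j) = j := by
  unfold smrH; split_ifs <;> first | contradiction | omega

lemma smrH_eq_smrWr {n j : ℕ} (hp : j % 2 = 0) : smrH n j = smrWr n j := by
  unfold smrH smrWr; split_ifs <;> first | contradiction | omega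

lemma smrWr_smrH {n j : ℕ} (h2 : n % 2 = 0) (hj : j < n) (hp : j % 2 = 1) :
    smrWr n (smrH n j) = j := by
  unfold smrWr smrH; split_ifs <;> first | contradiction | omega

lemma smr_mem_entrySet {n : ℕ} (h2 : n % 2 = 0) (x : ℤ) :
    x ∈ smrEntrySet 3 n ↔ x ≠ 0 ∧ -(3 * ((n : ℤ) / 2)) ≤ x ∧ x ≤ 3 * ((n : ℤ) / 2) := by
  have h1 : ¬(3 * n % 2 = 1) := by omega
  simp only [smrEntrySet, if_neg h1, Finset.mem_erase, Finset.mem_Icc]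
  constructor
  · rintro ⟨hx, h3, h4⟩
    refine ⟨hx, ?_, ?_⟩ <;> omega
  · rintro ⟨hx, h3, h4⟩
    refine ⟨hx, ?_, ?_⟩ <;> omega

lemma smr_card_entrySet {n : ℕ} (h2 : n % 2 = 0) : (smrEntrySet 3 n).card = 3 * n := by
  have h1 : ¬(3 * n % 2 = 1) := by omega
  have h0 : (0 : ℤ) ∈ Finset.Icc (-(((3:ℕ) : ℤ) * n / 2)) (((3:ℕ) : ℤ) * n / 2) := by
    simp only [Finset.mem_Icc]
    constructor <;> omega
  simp only [smrEntrySet, if_neg h1]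
  rw [Finset.card_erase_of_mem h0, Int.card_Icc]
  omega


lemma smrF_zero (n : ℕ) (y : ℕ → ℤ) (j : ℕ) :
    smrF n y 0 j = y (smrWr n j) - y j := by simp [smrF]

lemma smrF_one (n : ℕ) (y : ℕ → ℤ) (j : ℕ) :
    smrF n y 1 j = if j % 2 = 0 then y j else -y (smrWr n j) := by simp [smrF]

lemma smrF_two (n : ℕ) (y : ℕ → ℤ) (j : ℕ) :
    smrF n y 2 j = if j % 2 = 0 then -y (smrWr n j) else y j := by simp [smrF]

lemma smrWr_parity {n j : ℕ} (h2 : n % 2 = 0) (hj : j < n) (hp : j % 2 = 1) :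
    smrWr n j % 2 = 0 := by
  unfold smrWr; split_ifs <;> omega

lemma smrF_one_g {n : ℕ} (y : ℕ → ℤ) (h2 : n % 2 = 0) {j : ℕ} (hj : j < n) :
    smrF n y 1 (smrG n j) = -smrF n y 1 j := by
  by_cases hp : j % 2 = 0
  · have hq : ¬(smrG n j % 2 = 0) := by rw [smrG_parity h2 hj]; omega
    rw [smrF_one, smrF_one, if_neg hq, smrWr_smrG h2 hj hp, if_pos hp]
  · have hp' : j % 2 = 1 := by omega
    have hg : smrG n j = smrWr n j := smrG_eq_smrWr hp'
    rw [smrF_one, smrF_one, hg, if_pos (smrWr_parity h2 hj hp'), if_neg hp, neg_neg]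

lemma smrF_two_g {n : ℕ} (y : ℕ → ℤ) (h2 : n % 2 = 0) {j : ℕ} (hj : j < n) :
    smrF n y 2 (smrH n j) = -smrF n y 2 j := by
  by_cases hp : j % 2 = 0
  · have hq : ¬(smrH n j % 2 = 0) := by rw [smrH_parity h2 hj]; omega
    rw [smrF_two, smrF_two, if_neg hq, smrH_eq_smrWr hp, if_pos hp, neg_neg]
  · have hp' : j % 2 = 1 := by omega
    have hq : smrH n j % 2 = 0 := by rw [smrH_parity h2 hj]; omega
    rw [smrF_two, smrF_two, if_pos hq, smrWr_smrH h2 hj hp', if_neg hp]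

/-- The generic construction: given a cyclic sequence `y` on `{0,…,n-1}` taking
values injectively in `[n/2+1, 3(n/2)]`, whose cyclic consecutive differences are
nonzero, bounded by `n/2` in absolute value, and pairwise distinct, we get the
desired signed magic rectangle. -/
theorem smr_generic (n : ℕ) (hn : 0 < n) (h2 : n % 2 = 0) (y : ℕ → ℤ)
    (hlo : ∀ j, j < n → (n : ℤ) / 2 + 1 ≤ y j)
    (hhi : ∀ j, j < n → y j ≤ 3 * ((n : ℤ) / 2))
    (hinj : ∀ j1, j1 < n → ∀ j2, j2 < n → y j1 = y j2 → j1 = j2)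
    (hd0 : ∀ j, j < n → y (smrWr n j) - y j ≠ 0)
    (hdb : ∀ j, j < n → -((n : ℤ) / 2) ≤ y (smrWr n j) - y j ∧ y (smrWr n j) - y j ≤ (n : ℤ) / 2)
    (hdinj : ∀ j1, j1 < n → ∀ j2, j2 < n →
      y (smrWr n j1) - y j1 = y (smrWr n j2) - y j2 → j1 = j2) :
    ∃ A : Fin 3 → Fin n → Option ℤ, IsSMR 3 n n 3 A ∧
      (∀ (i : Fin 3) (j : Fin n), A i j ≠ none) ∧
      (∀ (i : Fin 3) (x : ℤ), (∃ j : Fin n, A i j = some x) → ∃ j : Fin n, A i j = some (-x)) := by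
  have hK1 : (1 : ℤ) ≤ (n : ℤ) / 2 := by omega
  set A : Fin 3 → Fin n → Option ℤ := fun i j => some (smrF n y i.val j.val) with hA
  -- membership of all entries
  have hmem : ∀ (i : Fin 3) (j : Fin n), smrF n y i.val j.val ∈ smrEntrySet 3 n := by
    intro i j
    rw [smr_mem_entrySet h2]
    have hj := j.isLt
    have hw : smrWr n j.val < n := smrWr_lt hn hj
    have b1 := hlo _ hj; have b2 := hhi _ hj
    have b3 := hlo _ hw; have b4 := hhi _ hw
    have b5 := hd0 _ hj; have b6 := hdb _ hj
    rcases i with ⟨iv, hi⟩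
    interval_cases iv
    · simp only [smrF]; norm_num
      refine ⟨by omega, by omega, by omega⟩
    · simp only [smrF]; norm_num
      split_ifs <;> refine ⟨by omega, by omega, by omega⟩
    · simp only [smrF]; norm_num
      split_ifs <;> refine ⟨by omega, by omega, by omega⟩
  -- injectivity of the full entry map
  have hinjF : ∀ i1, i1 < 3 → ∀ i2, i2 < 3 → ∀ j1, j1 < n → ∀ j2, j2 < n →
      smrF n y i1 j1 = smrF n y i2 j2 → i1 = i2 ∧ j1 = j2 := by
    intro i1 hi1 i2 hi2 j1 hj1 j2 hj2 h
    have hw1 : smrWr n j1 < n := smrWr_lt hn hj1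
    have hw2 : smrWr n j2 < n := smrWr_lt hn hj2
    have b1 := hlo _ hj1; have b2 := hhi _ hj1
    have b3 := hlo _ hw1; have b4 := hhi _ hw1
    have b5 := hlo _ hj2; have b6 := hhi _ hj2
    have b7 := hlo _ hw2; have b8 := hhi _ hw2
    have c1 := hd0 _ hj1; have c2 := hdb _ hj1
    have c3 := hd0 _ hj2; have c4 := hdb _ hj2
    have hy12 : y j1 = y j2 → j1 = j2 := hinj _ hj1 _ hj2
    have hyww : y (smrWr n j1) = y (smrWr n j2) → j1 = j2 := fun hh =>
      smrWr_inj hj1 hj2 (hinj _ hw1 _ hw2 hh)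
    have hdd : y (smrWr n j1) - y j1 = y (smrWr n j2) - y j2 → j1 = j2 := hdinj _ hj1 _ hj2
    interval_cases i1 <;> interval_cases i2 <;> simp only [smrF] at h <;> norm_num at h
    · exact ⟨rfl, hdd h⟩
    · split_ifs at h <;> omega
    · split_ifs at h <;> omega
    · split_ifs at h <;> omega
    · refine ⟨rfl, ?_⟩
      split_ifs at h <;> first | exact hy12 h | exact hyww (neg_inj.mp h) | omega
    · split_ifs at h <;>
        first
          | exact absurd (hy12 h) (by omega)
          | exact absurd (hyww (neg_inj.mp h)) (by omega)
          | omega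
    · split_ifs at h <;> omega
    · split_ifs at h <;>
        first
          | exact absurd (hy12 h) (by omega)
          | exact absurd (hyww (neg_inj.mp h)) (by omega)
          | omega
    · refine ⟨rfl, ?_⟩
      split_ifs at h <;> first | exact hy12 h | exact hyww (neg_inj.mp h) | omega
  -- the entry map as a function on pairs, and its image
  have hcard : (smrEntrySet 3 n).card = 3 * n := smr_card_entrySet h2
  set F : Fin 3 × Fin n → ℤ := fun p => smrF n y p.1.val p.2.val with hF
  have hFinj : Function.Injective F := by
    intro p q h
    obtain ⟨ha, hb⟩ := hinjF p.1.val p.1.isLt q.1.val q.1.isLt p.2.val p.2.isLt q.2.val q.2.isLt h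
    exact Prod.ext (Fin.ext ha) (Fin.ext hb)
  have himg : Finset.image F Finset.univ = smrEntrySet 3 n := by
    apply Finset.eq_of_subset_of_card_le
    · intro x hx
      rw [Finset.mem_image] at hx
      obtain ⟨p, -, rfl⟩ := hx
      exact hmem p.1 p.2
    · rw [Finset.card_image_of_injective _ hFinj, hcard, Finset.card_univ]
      simp
  have hsurj : ∀ x ∈ smrEntrySet 3 n, ∃ p : Fin 3 × Fin n, F p = x := by
    intro x hx
    rw [← himg, Finset.mem_image] at hx
    obtain ⟨p, -, hp⟩ := hx
    exact ⟨p, hp⟩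
  -- the pairing involution on columns, as a map of `Fin n`
  have hval0 : ((0 : Fin 3) : ℕ) = 0 := rfl
  have hval1 : ((1 : Fin 3) : ℕ) = 1 := rfl
  have hval2 : ((2 : Fin 3) : ℕ) = 2 := rfl
  refine ⟨A, ⟨?_, ?_, ?_, ?_, ?_, ?_⟩, ?_, ?_⟩
  · -- row counts
    intro i
    rw [Finset.filter_true_of_mem (fun j _ => by simp [hA]), Finset.card_univ, Fintype.card_fin]
  · -- column counts
    intro j
    rw [Finset.filter_true_of_mem (fun i _ => by simp [hA]), Finset.card_univ]
    simp
  · -- entries lie in the entry set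
    intro i j x hx
    simp only [hA, Option.some.injEq] at hx
    exact hx ▸ hmem i j
  · -- each entry appears exactly once
    intro x hx
    obtain ⟨p, hp⟩ := hsurj x hx
    refine ⟨p, ?_, ?_⟩
    · simp only [hA, Option.some.injEq]
      exact hp
    · rintro q hq
      simp only [hA, Option.some.injEq] at hq
      exact hFinj (hq.trans hp.symm)
  · -- row sums
    intro i
    have hrw : ∀ i : Fin 3, ∀ j : Fin n, (A i j).getD 0 = smrF n y i.val j.val := by
      intro i j; simp [hA]
    rcases i with ⟨iv, hi⟩
    interval_cases iv
    · have : ∀ j : Fin n, (A ⟨0, hi⟩ j).getD 0 = y (smrWr n j.val) - y j.val := by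
        intro j; rw [hrw, smrF_zero]
      rw [Finset.sum_congr rfl fun j _ => this j, Finset.sum_sub_distrib]
      have heq : ∑ j : Fin n, y (smrWr n j.val) = ∑ j : Fin n, y j.val := by
        refine Finset.sum_nbij' (fun j : Fin n => (⟨smrWr n j.val, smrWr_lt hn j.isLt⟩ : Fin n))
          (fun j : Fin n => (⟨if j.val = 0 then n - 1 else j.val - 1,
            by have := j.isLt; split_ifs <;> omega⟩ : Fin n))
          (fun a _ => Finset.mem_univ _) (fun a _ => Finset.mem_univ _) ?_ ?_ ?_
        · intro a _
          apply Fin.ext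
          have := a.isLt
          simp only [smrWr]
          split_ifs <;> first | contradiction | omega
        · intro a _
          apply Fin.ext
          have := a.isLt
          simp only [smrWr]
          split_ifs <;> first | contradiction | omega
        · intro a _
          rfl
      rw [heq, sub_self]
    · refine Finset.sum_ninvolution
        (fun j : Fin n => (⟨smrG n j.val, smrG_lt hn j.isLt⟩ : Fin n)) ?_ ?_
        (fun a => Finset.mem_univ _) ?_
      · intro a
        rw [hrw, hrw]
        show smrF n y 1 a.val + smrF n y 1 (smrG n a.val) = 0
        rw [smrF_one_g y h2 a.isLt]
        ring
      · intro a _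
        have h1 : smrG n a.val % 2 = (a.val + 1) % 2 := smrG_parity h2 a.isLt
        intro hcon
        have : smrG n a.val = a.val := congrArg Fin.val hcon
        omega
      · intro a
        apply Fin.ext
        exact smrG_invol h2 a.isLt
    · refine Finset.sum_ninvolution
        (fun j : Fin n => (⟨smrH n j.val, smrH_lt hn j.isLt⟩ : Fin n)) ?_ ?_
        (fun a => Finset.mem_univ _) ?_
      · intro a
        rw [hrw, hrw]
        show smrF n y 2 a.val + smrF n y 2 (smrH n a.val) = 0
        rw [smrF_two_g y h2 a.isLt]
        ring
      · intro a _
        have h1 : smrH n a.val % 2 = (a.val + 1) % 2 := smrH_parity h2 a.isLt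
        intro hcon
        have : smrH n a.val = a.val := congrArg Fin.val hcon
        omega
      · intro a
        apply Fin.ext
        exact smrH_invol h2 a.isLt
  · -- column sums
    intro j
    rw [Fin.sum_univ_three]
    simp only [hA, Option.getD_some, hval0, hval1, hval2]
    rw [smrF_zero, smrF_one, smrF_two]
    split_ifs <;> ring
  · -- no empty cells
    intro i j
    simp [hA]
  · -- rows closed under negation
    rintro i x ⟨j, hj⟩
    have hx : smrF n y i.val j.val = x := by
      simp only [hA, Option.some.injEq] at hj
      exact hj
    rcases i with ⟨iv, hi⟩
    interval_cases iv
    · -- row 0 : use global surjectivity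
      rw [smrF_zero] at hx
      have hxb := hdb _ j.isLt
      have hx0 := hd0 _ j.isLt
      have hmx : -x ∈ smrEntrySet 3 n := by
        rw [smr_mem_entrySet h2]
        refine ⟨by omega, by omega, by omega⟩
      obtain ⟨⟨i', j'⟩, hp⟩ := hsurj _ hmx
      have hb1 := hlo _ j'.isLt
      have hb2 := hlo _ (smrWr_lt hn j'.isLt)
      rcases i' with ⟨iv', hi'⟩
      interval_cases iv'
      · exact ⟨j', by simp only [hA, Option.some.injEq]; exact hp⟩
      · exfalso
        have hp' : smrF n y 1 j'.val = -x := hp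
        rw [smrF_one] at hp'
        split_ifs at hp' <;> omega
      · exfalso
        have hp' : smrF n y 2 j'.val = -x := hp
        rw [smrF_two] at hp'
        split_ifs at hp' <;> omega
    · refine ⟨⟨smrG n j.val, smrG_lt hn j.isLt⟩, ?_⟩
      simp only [hA, Option.some.injEq]
      show smrF n y 1 (smrG n j.val) = -x
      rw [smrF_one_g y h2 j.isLt, hx]
    · refine ⟨⟨smrH n j.val, smrH_lt hn j.isLt⟩, ?_⟩
      simp only [hA, Option.some.injEq]
      show smrF n y 2 (smrH n j.val) = -x
      rw [smrF_two_g y h2 j.isLt, hx]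


/-- The cyclic sequence used when `n ≡ 0 (mod 4)`. -/
def smrYE (n j : ℕ) : ℤ :=
  if (j : ℤ) % 2 = 0 then 5 * ((n : ℤ) / 4) - (j : ℤ) / 2
  else if (j : ℤ) < 2 * ((n : ℤ) / 4) then 5 * ((n : ℤ) / 4) + 1 + (j : ℤ) / 2
  else (j : ℤ) / 2 + (n : ℤ) / 4 + 1

/-- The cyclic sequence used when `n ≡ 2 (mod 4)`. -/
def smrYO (n j : ℕ) : ℤ :=
  if (j : ℤ) % 2 = 0 then
    (if (j : ℤ) / 2 ≤ ((n : ℤ) - 2) / 4 then 3 * (((n : ℤ) - 2) / 4) + 2 - (j : ℤ) / 2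
     else 7 * (((n : ℤ) - 2) / 4) + 4 - (j : ℤ) / 2)
  else 3 * (((n : ℤ) - 2) / 4) + 3 + (j : ℤ) / 2

set_option maxHeartbeats 2000000 in
/-- For every even positive integer `n` there exists a signed magic rectangle
`SMR(3, n)` (with no empty cells) in which, additionally, each row is closed under
negation: whenever `x` appears in a row, `-x` appears in the same row. -/
theorem smr_three_by_even_neg_closed (n : ℕ) (hn : 0 < n) (hneven : Even n) :
    ∃ A : Fin 3 → Fin n → Option ℤ, IsSMR 3 n n 3 A ∧
      (∀ (i : Fin 3) (j : Fin n), A i j ≠ none) ∧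
      (∀ (i : Fin 3) (x : ℤ), (∃ j : Fin n, A i j = some x) → ∃ j : Fin n, A i j = some (-x)) := by
  have h2 : n % 2 = 0 := Nat.even_iff.mp hneven
  rcases (by omega : n % 4 = 0 ∨ n % 4 = 2) with h4 | h4
  · refine smr_generic n hn h2 (smrYE n) ?_ ?_ ?_ ?_ ?_ ?_
    · intro j hj
      unfold smrYE; split_ifs <;> omega
    · intro j hj
      unfold smrYE; split_ifs <;> omega
    · intro j1 hj1 j2 hj2 h
      unfold smrYE at h; split_ifs at h <;> omega
    · intro j hj
      unfold smrWr smrYE; split_ifs <;> first | contradiction | omega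
    · intro j hj
      unfold smrWr smrYE; split_ifs <;> first | contradiction | (constructor <;> omega)
    · intro j1 hj1 j2 hj2 h
      unfold smrWr smrYE at h; split_ifs at h <;> first | contradiction | omega
  · refine smr_generic n hn h2 (smrYO n) ?_ ?_ ?_ ?_ ?_ ?_
    · intro j hj
      unfold smrYO; split_ifs <;> omega
    · intro j hj
      unfold smrYO; split_ifs <;> omega
    · intro j1 hj1 j2 hj2 h
      unfold smrYO at h; split_ifs at h <;> omega
    · intro j hj
      unfold smrWr smrYO; split_ifs <;> first | contradiction | omega
    · intro j hj
      unfold smrWr smrYO; split_ifs <;> first | contradiction | (constructor <;> omega)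
    · intro j1 hj1 j2 hj2 h
      unfold smrWr smrYO at h; split_ifs at h <;> first | contradiction | omega
end

section
/- Let A be a signed magic rectangle SMR(m,n) with entry set X, and let 𝒫₁ = {C₁, C₂, …, Cₙ} be the partition of X given by the columns of A. Let k be an integer with k ≥ m and k dividing mn, and set ℓ = mn/k. If there exists a partition 𝒫₂ = {D₁, D₂, …, D_ℓ} of X such that each D_i has exactly k elements, the elements of each D_i sum to zero, and 𝒫₁ and 𝒫₂ are near orthogonal, then there exists a signed magic rectangle SMR(mn/k, n; k, m). -/
lemma smrEntrySet_congr {m r m' r' : ℕ} (h : m * r = m' * r') :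
    smrEntrySet m r = smrEntrySet m' r' := by
  have h2 : ((m : ℤ) * r) = ((m' : ℤ) * r') := by exact_mod_cast congrArg (Nat.cast : ℕ → ℤ) h
  simp only [smrEntrySet, h, h2]

/-- Main construction: let `A` be an `SMR(m, n)` (i.e. `SMR(m, n; n, m)`, no empty
cells) with entry set `X = smrEntrySet m n`, and let `𝒫₁` be the partition of `X`
given by the columns of `A`.  Let `k ≥ m` with `k ∣ mn` and `ℓ = mn/k`.  If
`D : Fin ℓ → Finset ℤ` is a partition of `X` into `k`-element sets each summing to
zero which is near orthogonal to `𝒫₁` (each `D i` meets each column of `A` in at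
most one element), then there exists an `SMR(mn/k, n; k, m)`. -/
theorem smr_main_construction (m n k : ℕ) (hm : 0 < m) (hn : 0 < n)
    (hkm : m ≤ k) (hdvd : k ∣ m * n)
    (A : Fin m → Fin n → Option ℤ) (hA : IsSMR m n n m A)
    (D : Fin (m * n / k) → Finset ℤ)
    (hcard : ∀ i, (D i).card = k)
    (hsum : ∀ i, ∑ x ∈ D i, x = 0)
    (hdisj : ∀ i₁ i₂, i₁ ≠ i₂ → Disjoint (D i₁) (D i₂))
    (hcover : ∀ x : ℤ, x ∈ smrEntrySet m n ↔ ∃ i, x ∈ D i)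
    (hortho : ∀ (i : Fin (m * n / k)) (j : Fin n),
      ((D i : Set ℤ) ∩ {x : ℤ | ∃ r : Fin m, A r j = some x}).Subsingleton) :
    ∃ B : Fin (m * n / k) → Fin n → Option ℤ, IsSMR (m * n / k) n k m B := by

  classical
  obtain ⟨hrow, hcol, hmem, huniq, hrsum, hcsum⟩ := hA
  -- the entry set of the new rectangle equals X
  have hX : smrEntrySet (m * n / k) k = smrEntrySet m n :=
    smrEntrySet_congr (Nat.div_mul_cancel hdvd)
  have hk0 : 0 < k := lt_of_lt_of_le hm hkm
  have hℓ0 : 0 < m * n / k :=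
    Nat.div_pos (Nat.le_of_dvd (by positivity) hdvd) hk0
  have : Nonempty (Fin m × Fin n) := ⟨⟨⟨0, hm⟩, ⟨0, hn⟩⟩⟩
  have : Nonempty (Fin (m * n / k)) := ⟨⟨0, hℓ0⟩⟩
  -- A has no empty cells
  have hfull : ∀ (i : Fin m) (j : Fin n), A i j ≠ none := by
    intro i j
    have h1 := hrow i
    have h2 : (Finset.univ.filter fun j : Fin n => A i j ≠ none) = Finset.univ := by
      apply Finset.eq_univ_of_card
      simpa using h1
    have := Finset.eq_univ_iff_forall.mp h2 j
    simpa using this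
  have hentry : ∀ (r : Fin m) (j : Fin n), A r j = some ((A r j).getD 0) := by
    intro r j
    cases h : A r j with
    | none => exact absurd h (hfull r j)
    | some a => simp
  -- position function
  have hpos' : ∀ x : ℤ, ∃ p : Fin m × Fin n, x ∈ smrEntrySet m n → A p.1 p.2 = some x := by
    intro x
    by_cases h : x ∈ smrEntrySet m n
    · obtain ⟨p, hp, -⟩ := huniq x h
      exact ⟨p, fun _ => hp⟩
    · exact ⟨Classical.arbitrary _, fun h' => absurd h' h⟩
  choose pos hpos using hpos'
  have hpos_uniq : ∀ x ∈ smrEntrySet m n, ∀ p : Fin m × Fin n,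
      A p.1 p.2 = some x → p = pos x := by
    intro x hx p hp
    exact (huniq x hx).unique hp (hpos x hx)
  -- membership in X from D
  have hDX : ∀ {i : Fin (m * n / k)} {x : ℤ}, x ∈ D i → x ∈ smrEntrySet m n :=
    fun h => (hcover _).2 ⟨_, h⟩
  -- index function for the partition D
  have hdidx' : ∀ x : ℤ, ∃ i : Fin (m * n / k), x ∈ smrEntrySet m n → x ∈ D i := by
    intro x
    by_cases h : x ∈ smrEntrySet m n
    · obtain ⟨i, hi⟩ := (hcover x).1 h
      exact ⟨i, fun _ => hi⟩
    · exact ⟨Classical.arbitrary _, fun h' => absurd h' h⟩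
  choose didx hdidx using hdidx'
  have hdidx_uniq : ∀ (i : Fin (m * n / k)) (x : ℤ), x ∈ D i → i = didx x := by
    intro i x hx
    by_contra h
    exact Finset.disjoint_left.mp (hdisj i (didx x) h) hx (hdidx x (hDX hx))
  -- the new array
  set B : Fin (m * n / k) → Fin n → Option ℤ := fun i j =>
    if h : ∃ x, x ∈ D i ∧ ∃ r : Fin m, A r j = some x then some h.choose else none with hBdef
  have hB_some : ∀ (i : Fin (m * n / k)) (j : Fin n) (x : ℤ),
      B i j = some x ↔ (x ∈ D i ∧ ∃ r : Fin m, A r j = some x) := by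
    intro i j x
    constructor
    · intro hx
      rw [hBdef] at hx
      simp only at hx
      split at hx
      · rename_i h
        obtain rfl : h.choose = x := by simpa using hx
        exact h.choose_spec
      · simp at hx
    · intro hx
      have h : ∃ x, x ∈ D i ∧ ∃ r : Fin m, A r j = some x := ⟨x, hx⟩
      have hc := h.choose_spec
      have heq : h.choose = x := by
        apply hortho i j
        · exact ⟨hc.1, hc.2⟩
        · exact ⟨hx.1, hx.2⟩
      rw [hBdef]
      simp only [dif_pos h, heq]
  have hB_some' : ∀ (i : Fin (m * n / k)) (j : Fin n) (x : ℤ),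
      B i j = some x ↔ (x ∈ D i ∧ (pos x).2 = j) := by
    intro i j x
    rw [hB_some]
    constructor
    · rintro ⟨hx, r, hr⟩
      have := hpos_uniq x (hDX hx) (r, j) hr
      exact ⟨hx, by rw [← this]⟩
    · rintro ⟨hx, hj⟩
      refine ⟨hx, (pos x).1, ?_⟩
      rw [← hj]
      exact hpos x (hDX hx)
  have hB_ne : ∀ (i : Fin (m * n / k)) (j : Fin n), B i j ≠ none ↔ ∃ x, B i j = some x := by
    intro i j
    exact Option.ne_none_iff_exists'
  refine ⟨B, ?_, ?_, ?_, ?_, ?_, ?_⟩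
  · -- row counts
    intro i
    rw [← hcard i]
    symm
    apply Finset.card_bij (fun x _ => (pos x).2)
    · intro x hx
      simp only [Finset.mem_filter, Finset.mem_univ, true_and]
      rw [hB_ne]
      exact ⟨x, (hB_some' i _ x).2 ⟨hx, rfl⟩⟩
    · intro x₁ hx₁ x₂ hx₂ h
      have h1 : B i (pos x₁).2 = some x₁ := (hB_some' i _ x₁).2 ⟨hx₁, rfl⟩
      have h2 : B i (pos x₁).2 = some x₂ := (hB_some' i _ x₂).2 ⟨hx₂, h.symm⟩
      rw [h1] at h2
      exact Option.some_injective _ h2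
    · intro j hj
      simp only [Finset.mem_filter, Finset.mem_univ, true_and] at hj
      obtain ⟨x, hx⟩ := (hB_ne i j).1 hj
      obtain ⟨hxD, hxj⟩ := (hB_some' i j x).1 hx
      exact ⟨x, hxD, hxj⟩
  · -- column counts
    intro j
    have : (Finset.univ : Finset (Fin m)).card =
        (Finset.univ.filter fun i : Fin (m * n / k) => B i j ≠ none).card := by
      apply Finset.card_bij (fun r _ => didx ((A r j).getD 0))
      · intro r _
        set e := (A r j).getD 0 with he
        have heX : e ∈ smrEntrySet m n := hmem r j e (hentry r j)
        simp only [Finset.mem_filter, Finset.mem_univ, true_and]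
        rw [hB_ne]
        exact ⟨e, (hB_some _ j e).2 ⟨hdidx e heX, r, hentry r j⟩⟩
      · intro r₁ _ r₂ _ h
        set e₁ := (A r₁ j).getD 0 with he₁
        set e₂ := (A r₂ j).getD 0 with he₂
        have hX₁ : e₁ ∈ smrEntrySet m n := hmem r₁ j e₁ (hentry r₁ j)
        have hX₂ : e₂ ∈ smrEntrySet m n := hmem r₂ j e₂ (hentry r₂ j)
        have he : e₁ = e₂ := by
          apply hortho (didx e₁) j
          · exact ⟨hdidx e₁ hX₁, r₁, hentry r₁ j⟩
          · rw [h]; exact ⟨hdidx e₂ hX₂, r₂, hentry r₂ j⟩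
        have h1 := hpos_uniq e₁ hX₁ (r₁, j) (hentry r₁ j)
        have h2 := hpos_uniq e₁ hX₁ (r₂, j) (by rw [he]; exact hentry r₂ j)
        have : (r₁, j) = ((r₂, j) : Fin m × Fin n) := by rw [h1, h2]
        exact (Prod.ext_iff.1 this).1
      · intro i hi
        simp only [Finset.mem_filter, Finset.mem_univ, true_and] at hi
        obtain ⟨x, hx⟩ := (hB_ne i j).1 hi
        obtain ⟨hxD, r, hr⟩ := (hB_some i j x).1 hx
        refine ⟨r, Finset.mem_univ r, ?_⟩
        have : (A r j).getD 0 = x := by rw [hr]; rfl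
        rw [this]
        exact (hdidx_uniq i x hxD).symm
    rw [← this]
    simp
  · -- entries in the entry set
    intro i j x hx
    rw [hX]
    exact hDX ((hB_some i j x).1 hx).1
  · -- each entry exactly once
    intro x hx
    rw [hX] at hx
    refine ⟨(didx x, (pos x).2), ?_, ?_⟩
    · exact (hB_some' _ _ x).2 ⟨hdidx x hx, rfl⟩
    · rintro ⟨i, j⟩ hp
      obtain ⟨hxD, hj⟩ := (hB_some' i j x).1 hp
      have := hdidx_uniq i x hxD
      simp only [Prod.mk.injEq]
      exact ⟨this, hj.symm⟩
  · -- row sums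
    intro i
    have h1 : ∑ x ∈ D i, x =
        ∑ j ∈ (Finset.univ.filter fun j : Fin n => B i j ≠ none), (B i j).getD 0 := by
      apply Finset.sum_bij (fun x _ => (pos x).2)
      · intro x hx
        simp only [Finset.mem_filter, Finset.mem_univ, true_and]
        rw [hB_ne]
        exact ⟨x, (hB_some' i _ x).2 ⟨hx, rfl⟩⟩
      · intro x₁ hx₁ x₂ hx₂ h
        have h1 : B i (pos x₁).2 = some x₁ := (hB_some' i _ x₁).2 ⟨hx₁, rfl⟩
        have h2 : B i (pos x₁).2 = some x₂ := (hB_some' i _ x₂).2 ⟨hx₂, h.symm⟩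
        rw [h1] at h2
        exact Option.some_injective _ h2
      · intro j hj
        simp only [Finset.mem_filter, Finset.mem_univ, true_and] at hj
        obtain ⟨x, hx⟩ := (hB_ne i j).1 hj
        obtain ⟨hxD, hxj⟩ := (hB_some' i j x).1 hx
        exact ⟨x, hxD, hxj⟩
      · intro x hx
        have : B i (pos x).2 = some x := (hB_some' i _ x).2 ⟨hx, rfl⟩
        rw [this]; rfl
    have h2 : ∑ j ∈ (Finset.univ.filter fun j : Fin n => B i j ≠ none), (B i j).getD 0
        = ∑ j : Fin n, (B i j).getD 0 := by
      apply Finset.sum_subset (Finset.subset_univ _)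
      intro j _ hj
      simp only [Finset.mem_filter, Finset.mem_univ, true_and, not_not] at hj
      rw [hj]; rfl
    rw [← h2, ← h1, hsum i]
  · -- column sums
    intro j
    have h1 : ∑ r : Fin m, (A r j).getD 0 =
        ∑ i ∈ (Finset.univ.filter fun i : Fin (m * n / k) => B i j ≠ none), (B i j).getD 0 := by
      apply Finset.sum_bij (fun r _ => didx ((A r j).getD 0))
      · intro r _
        set e := (A r j).getD 0 with he
        have heX : e ∈ smrEntrySet m n := hmem r j e (hentry r j)
        simp only [Finset.mem_filter, Finset.mem_univ, true_and]
        rw [hB_ne]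
        exact ⟨e, (hB_some _ j e).2 ⟨hdidx e heX, r, hentry r j⟩⟩
      · intro r₁ _ r₂ _ h
        set e₁ := (A r₁ j).getD 0 with he₁
        set e₂ := (A r₂ j).getD 0 with he₂
        have hX₁ : e₁ ∈ smrEntrySet m n := hmem r₁ j e₁ (hentry r₁ j)
        have hX₂ : e₂ ∈ smrEntrySet m n := hmem r₂ j e₂ (hentry r₂ j)
        have he : e₁ = e₂ := by
          apply hortho (didx e₁) j
          · exact ⟨hdidx e₁ hX₁, r₁, hentry r₁ j⟩
          · rw [h]; exact ⟨hdidx e₂ hX₂, r₂, hentry r₂ j⟩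
        have ha := hpos_uniq e₁ hX₁ (r₁, j) (hentry r₁ j)
        have hb := hpos_uniq e₁ hX₁ (r₂, j) (by rw [he]; exact hentry r₂ j)
        have : (r₁, j) = ((r₂, j) : Fin m × Fin n) := by rw [ha, hb]
        exact (Prod.ext_iff.1 this).1
      · intro i hi
        simp only [Finset.mem_filter, Finset.mem_univ, true_and] at hi
        obtain ⟨x, hx⟩ := (hB_ne i j).1 hi
        obtain ⟨hxD, r, hr⟩ := (hB_some i j x).1 hx
        refine ⟨r, Finset.mem_univ r, ?_⟩
        have : (A r j).getD 0 = x := by rw [hr]; rfl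
        rw [this]
        exact (hdidx_uniq i x hxD).symm
      · intro r _
        set e := (A r j).getD 0 with he
        have heX : e ∈ smrEntrySet m n := hmem r j e (hentry r j)
        have : B (didx e) j = some e := (hB_some _ j e).2 ⟨hdidx e heX, r, hentry r j⟩
        rw [this]; rfl
    have h2 : ∑ i ∈ (Finset.univ.filter fun i : Fin (m * n / k) => B i j ≠ none), (B i j).getD 0
        = ∑ i : Fin (m * n / k), (B i j).getD 0 := by
      apply Finset.sum_subset (Finset.subset_univ _)
      intro i _ hi
      simp only [Finset.mem_filter, Finset.mem_univ, true_and, not_not] at hi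
      rw [hi]; rfl
    rw [← h2, ← h1, hcsum j]
end

section
/- Let n and k be integers with n > k ≥ 5, k odd, n even, and k dividing 3n, and write n = kq + r with 0 ≤ r < k. Let R₃ = {±3i : 1 ≤ i ≤ n/2}. Then there exists a collection S₃ of pairwise disjoint 3-element subsets of R₃ such that: (1) the elements of each 3-subset sum to zero; (2) if {a,b,c} ∈ S₃ then {−a,−b,−c} ∈ S₃; (3) |S₃| ≥ q if r = 0, |S₃| ≥ q+1 if r = k/3, and |S₃| ≥ q+2 if r = 2k/3. -/
/-- The set `R₃ = {±3i : 1 ≤ i ≤ n/2}`, the entry set of the third row of the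
standard `SMR(3, n)` for `n` even. -/
def smrR3 (n : ℕ) : Finset ℤ :=
  (Finset.Icc 1 (n / 2)).biUnion fun i => {3 * (i : ℤ), -(3 * (i : ℤ))}

private def triP (t j : ℕ) : Finset ℤ :=
  {3 * (2 * (j : ℤ) - 1), 3 * (3 * (t : ℤ) - j + 1), -(3 * (3 * (t : ℤ) + j))}

private def triN (t j : ℕ) : Finset ℤ :=
  {-(3 * (2 * (j : ℤ) - 1)), -(3 * (3 * (t : ℤ) - j + 1)), 3 * (3 * (t : ℤ) + j)}

private lemma mem_smrR3_of {n : ℕ} {z : ℤ} (h1 : 1 ≤ z) (h2 : z ≤ (n / 2 : ℕ)) :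
    3 * z ∈ smrR3 n ∧ -(3 * z) ∈ smrR3 n := by
  obtain ⟨i, hi1, hi2, rfl⟩ : ∃ i : ℕ, 1 ≤ i ∧ i ≤ n / 2 ∧ (i : ℤ) = z :=
    ⟨z.toNat, by omega, by omega, by omega⟩
  constructor <;>
    · simp only [smrR3, Finset.mem_biUnion, Finset.mem_Icc, Finset.mem_insert,
        Finset.mem_singleton]
      exact ⟨i, ⟨hi1, hi2⟩, by simp⟩

private lemma triP_subset {n t j : ℕ} (hj1 : 1 ≤ j) (hjt : j ≤ t) (ht : 4 * t ≤ n / 2) :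
    triP t j ⊆ smrR3 n := by
  intro x hx
  simp only [triP, Finset.mem_insert, Finset.mem_singleton] at hx
  rcases hx with rfl | rfl | rfl
  · exact (mem_smrR3_of (by omega) (by omega)).1
  · exact (mem_smrR3_of (by omega) (by omega)).1
  · exact (mem_smrR3_of (by omega) (by omega)).2

private lemma triN_subset {n t j : ℕ} (hj1 : 1 ≤ j) (hjt : j ≤ t) (ht : 4 * t ≤ n / 2) :
    triN t j ⊆ smrR3 n := by
  intro x hx
  simp only [triN, Finset.mem_insert, Finset.mem_singleton] at hx
  rcases hx with rfl | rfl | rfl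
  · exact (mem_smrR3_of (by omega) (by omega)).2
  · exact (mem_smrR3_of (by omega) (by omega)).2
  · exact (mem_smrR3_of (by omega) (by omega)).1

private lemma triP_card {t j : ℕ} (hj1 : 1 ≤ j) (hjt : j ≤ t) : (triP t j).card = 3 := by
  rw [triP, Finset.card_insert_of_notMem (by simp; omega),
    Finset.card_insert_of_notMem (by simp; omega), Finset.card_singleton]

private lemma triN_card {t j : ℕ} (hj1 : 1 ≤ j) (hjt : j ≤ t) : (triN t j).card = 3 := by
  rw [triN, Finset.card_insert_of_notMem (by simp; omega),
    Finset.card_insert_of_notMem (by simp; omega), Finset.card_singleton]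

private lemma triP_sum {t j : ℕ} (hj1 : 1 ≤ j) (hjt : j ≤ t) : ∑ x ∈ triP t j, x = 0 := by
  rw [triP, Finset.sum_insert (by simp; omega), Finset.sum_insert (by simp; omega),
    Finset.sum_singleton]
  ring

private lemma triN_sum {t j : ℕ} (hj1 : 1 ≤ j) (hjt : j ≤ t) : ∑ x ∈ triN t j, x = 0 := by
  rw [triN, Finset.sum_insert (by simp; omega), Finset.sum_insert (by simp; omega),
    Finset.sum_singleton]
  ring

private lemma image_neg_triP (t j : ℕ) : (triP t j).image (fun x => -x) = triN t j := by
  simp [triP, triN, Finset.image_insert]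

private lemma image_neg_triN (t j : ℕ) : (triN t j).image (fun x => -x) = triP t j := by
  simp [triP, triN, Finset.image_insert]

private lemma disj_PP {t j j' : ℕ} (hj1 : 1 ≤ j) (hjt : j ≤ t) (hj'1 : 1 ≤ j')
    (hj't : j' ≤ t) (hne : j ≠ j') : Disjoint (triP t j) (triP t j') := by
  simp only [triP, Finset.disjoint_left, Finset.mem_insert, Finset.mem_singleton]
  rintro x (rfl | rfl | rfl) h <;> rcases h with h | h | h <;> omega

private lemma disj_NN {t j j' : ℕ} (hj1 : 1 ≤ j) (hjt : j ≤ t) (hj'1 : 1 ≤ j')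
    (hj't : j' ≤ t) (hne : j ≠ j') : Disjoint (triN t j) (triN t j') := by
  simp only [triN, Finset.disjoint_left, Finset.mem_insert, Finset.mem_singleton]
  rintro x (rfl | rfl | rfl) h <;> rcases h with h | h | h <;> omega

private lemma disj_PN {t j j' : ℕ} (hj1 : 1 ≤ j) (hjt : j ≤ t) (hj'1 : 1 ≤ j')
    (hj't : j' ≤ t) : Disjoint (triP t j) (triN t j') := by
  simp only [triP, triN, Finset.disjoint_left, Finset.mem_insert, Finset.mem_singleton]
  rintro x (rfl | rfl | rfl) h <;> rcases h with h | h | h <;> omega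

private lemma triP_nonempty (t j : ℕ) : (triP t j).Nonempty :=
  ⟨_, Finset.mem_insert_self _ _⟩

private lemma triN_nonempty (t j : ℕ) : (triN t j).Nonempty :=
  ⟨_, Finset.mem_insert_self _ _⟩

private lemma triP_ne_triN {t j j' : ℕ} (hj1 : 1 ≤ j) (hjt : j ≤ t) (hj'1 : 1 ≤ j')
    (hj't : j' ≤ t) : triP t j ≠ triN t j' := by
  intro h
  obtain ⟨x, hx⟩ := triP_nonempty t j
  exact (Finset.disjoint_left.mp (disj_PN hj1 hjt hj'1 hj't)) hx (h ▸ hx)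

private lemma main_aux (n t : ℕ) (ht : 4 * t ≤ n / 2) :
    ∃ S₃ : Finset (Finset ℤ),
      (∀ T ∈ S₃, T ⊆ smrR3 n ∧ T.card = 3 ∧ ∑ x ∈ T, x = 0) ∧
      (∀ T ∈ S₃, T.image (fun x => -x) ∈ S₃) ∧
      (∀ T₁ ∈ S₃, ∀ T₂ ∈ S₃, T₁ ≠ T₂ → Disjoint T₁ T₂) ∧
      S₃.card = 2 * t := by
  refine ⟨((Finset.Icc 1 t).image (triP t)) ∪ ((Finset.Icc 1 t).image (triN t)),
    ?_, ?_, ?_, ?_⟩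
  · intro T hT
    simp only [Finset.mem_union, Finset.mem_image, Finset.mem_Icc] at hT
    rcases hT with ⟨j, ⟨h1, h2⟩, rfl⟩ | ⟨j, ⟨h1, h2⟩, rfl⟩
    · exact ⟨triP_subset h1 h2 ht, triP_card h1 h2, triP_sum h1 h2⟩
    · exact ⟨triN_subset h1 h2 ht, triN_card h1 h2, triN_sum h1 h2⟩
  · intro T hT
    simp only [Finset.mem_union, Finset.mem_image, Finset.mem_Icc] at hT ⊢
    rcases hT with ⟨j, hj, rfl⟩ | ⟨j, hj, rfl⟩
    · exact Or.inr ⟨j, hj, (image_neg_triP t j).symm ▸ rfl⟩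
    · exact Or.inl ⟨j, hj, (image_neg_triN t j).symm ▸ rfl⟩
  · intro T₁ hT₁ T₂ hT₂ hne
    simp only [Finset.mem_union, Finset.mem_image, Finset.mem_Icc] at hT₁ hT₂
    rcases hT₁ with ⟨j, ⟨h1, h2⟩, rfl⟩ | ⟨j, ⟨h1, h2⟩, rfl⟩ <;>
      rcases hT₂ with ⟨j', ⟨h1', h2'⟩, rfl⟩ | ⟨j', ⟨h1', h2'⟩, rfl⟩
    · exact disj_PP h1 h2 h1' h2' (fun h => hne (by rw [h]))
    · exact disj_PN h1 h2 h1' h2'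
    · exact (disj_PN h1' h2' h1 h2).symm
    · exact disj_NN h1 h2 h1' h2' (fun h => hne (by rw [h]))
  · have hinjP : Set.InjOn (triP t) (Finset.Icc 1 t) := by
      intro j hj j' hj' h
      simp only [Finset.coe_Icc, Set.mem_Icc] at hj hj'
      by_contra hne
      obtain ⟨x, hx⟩ := triP_nonempty t j
      exact (Finset.disjoint_left.mp (disj_PP hj.1 hj.2 hj'.1 hj'.2 hne)) hx (h ▸ hx)
    have hinjN : Set.InjOn (triN t) (Finset.Icc 1 t) := by
      intro j hj j' hj' h
      simp only [Finset.coe_Icc, Set.mem_Icc] at hj hj'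
      by_contra hne
      obtain ⟨x, hx⟩ := triN_nonempty t j
      exact (Finset.disjoint_left.mp (disj_NN hj.1 hj.2 hj'.1 hj'.2 hne)) hx (h ▸ hx)
    have hd : Disjoint ((Finset.Icc 1 t).image (triP t)) ((Finset.Icc 1 t).image (triN t)) := by
      simp only [Finset.disjoint_left, Finset.mem_image, Finset.mem_Icc]
      rintro T ⟨j, ⟨h1, h2⟩, rfl⟩ ⟨j', ⟨h1', h2'⟩, heq⟩
      exact triP_ne_triN h1 h2 h1' h2' heq.symm
    rw [Finset.card_union_of_disjoint hd, Finset.card_image_of_injOn hinjP,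
      Finset.card_image_of_injOn hinjN, Nat.card_Icc]
    omega

/-- For `n > k ≥ 5` with `k` odd, `n` even and `k ∣ 3n` (writing `q = n / k` and
`r = n % k`), there exists a collection `S₃` of pairwise disjoint 3-element subsets
of `R₃ = {±3i : 1 ≤ i ≤ n/2}` such that each 3-subset sums to zero, `S₃` is closed
under negation, and `|S₃|` is at least `q`, `q + 1`, `q + 2` according as `r = 0`,
`3r = k`, `3r = 2k`. -/
theorem exists_S3 (n k : ℕ) (hk5 : 5 ≤ k) (hkn : k < n) (hkodd : Odd k)
    (hneven : Even n) (hdvd : k ∣ 3 * n) :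
    ∃ S₃ : Finset (Finset ℤ),
      (∀ T ∈ S₃, T ⊆ smrR3 n ∧ T.card = 3 ∧ ∑ x ∈ T, x = 0) ∧
      (∀ T ∈ S₃, T.image (fun x => -x) ∈ S₃) ∧
      (∀ T₁ ∈ S₃, ∀ T₂ ∈ S₃, T₁ ≠ T₂ → Disjoint T₁ T₂) ∧
      (n % k = 0 → n / k ≤ S₃.card) ∧
      (3 * (n % k) = k → n / k + 1 ≤ S₃.card) ∧
      (3 * (n % k) = 2 * k → n / k + 2 ≤ S₃.card) := by
  have hk0 : 0 < k := by omega
  have hdm : k * (n / k) + n % k = n := Nat.div_add_mod n k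
  have hkodd' : k % 2 = 1 := Nat.odd_iff.mp hkodd
  have hne2 : n % 2 = 0 := Nat.even_iff.mp hneven
  have hrk : n % k < k := Nat.mod_lt n hk0
  have hq1 : 1 ≤ n / k := (Nat.one_le_div_iff hk0).mpr (le_of_lt hkn)
  have hkne : ¬ Even k := by simp [Nat.even_iff, hkodd']
  by_cases h2 : 3 * (n % k) = 2 * k
  · -- r = 2k/3, q even, need q + 2 triples
    have hk9 : 9 ≤ k := by omega
    have hkq : (k * (n / k)) % 2 = 0 := by omega
    have hq2 : (n / k) % 2 = 0 := by
      have := (Nat.even_mul.mp (Nat.even_iff.mpr hkq)).resolve_left hkne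
      exact Nat.even_iff.mp this
    have h9q : 9 * (n / k) ≤ k * (n / k) := Nat.mul_le_mul_right _ hk9
    obtain ⟨S, hS1, hS2, hS3, hScard⟩ := main_aux n (n / k / 2 + 1) (by omega)
    exact ⟨S, hS1, hS2, hS3, by omega, by omega, by omega⟩
  · by_cases h1 : 3 * (n % k) = k
    · -- r = k/3, q odd, need q + 1 triples
      have hk9 : 9 ≤ k := by omega
      have hkq : (k * (n / k)) % 2 = 1 := by omega
      have hq2 : (n / k) % 2 = 1 := by
        have := (Nat.odd_mul.mp (Nat.odd_iff.mpr hkq)).2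
        exact Nat.odd_iff.mp this
      have h9q : 9 * (n / k) ≤ k * (n / k) := Nat.mul_le_mul_right _ hk9
      obtain ⟨S, hS1, hS2, hS3, hScard⟩ := main_aux n ((n / k + 1) / 2) (by omega)
      exact ⟨S, hS1, hS2, hS3, by omega, by omega, by omega⟩
    · by_cases h0 : n % k = 0
      · -- r = 0, q even, need q triples
        have hkq : (k * (n / k)) % 2 = 0 := by omega
        have hq2 : (n / k) % 2 = 0 := by
          have := (Nat.even_mul.mp (Nat.even_iff.mpr hkq)).resolve_left hkne
          exact Nat.even_iff.mp this
        have h5q : 5 * (n / k) ≤ k * (n / k) := Nat.mul_le_mul_right _ hk5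
        obtain ⟨S, hS1, hS2, hS3, hScard⟩ := main_aux n (n / k / 2) (by omega)
        exact ⟨S, hS1, hS2, hS3, by omega, by omega, by omega⟩
      · obtain ⟨S, hS1, hS2, hS3, hScard⟩ := main_aux n 0 (by omega)
        exact ⟨S, hS1, hS2, hS3, by omega, by omega, by omega⟩
end

section
/- If there exists an integer Heffter array H(m,n;s,t), then there exists a signed magic rectangle SMR(m, 2n; 2s, t) (obtained by placing A and −A side by side as [A −A]). -/
/-- `A` is an integer Heffter array `H(m, n; s, t)`: an `m × n` array with cells
either empty (`none`) or filled with an integer from `{±1, …, ±ms}`, having exactly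
`s` filled cells in each row and `t` in each column, all of whose row sums and
column sums are zero, and such that for every `x ∈ {1, …, ms}` exactly one of `x`
and `-x` appears in the array, in exactly one cell. -/
def IsHeffter (m n s t : ℕ) (A : Fin m → Fin n → Option ℤ) : Prop :=
  (∀ i : Fin m, (Finset.univ.filter fun j : Fin n => A i j ≠ none).card = s) ∧
  (∀ j : Fin n, (Finset.univ.filter fun i : Fin m => A i j ≠ none).card = t) ∧
  (∀ (i : Fin m) (j : Fin n) (x : ℤ), A i j = some x → 1 ≤ |x| ∧ |x| ≤ (m : ℤ) * s) ∧
  (∀ x : ℤ, 1 ≤ x → x ≤ (m : ℤ) * s →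
    ∃! p : Fin m × Fin n, A p.1 p.2 = some x ∨ A p.1 p.2 = some (-x)) ∧
  (∀ i : Fin m, ∑ j : Fin n, (A i j).getD 0 = 0) ∧
  (∀ j : Fin n, ∑ i : Fin m, (A i j).getD 0 = 0)

lemma smr_mem_iff (m s : ℕ) (x : ℤ) :
    x ∈ smrEntrySet m (2 * s) ↔ x ≠ 0 ∧ |x| ≤ (m : ℤ) * s := by
  have h2 : ¬ (m * (2 * s)) % 2 = 1 := by
    have : m * (2 * s) = 2 * (m * s) := by ring
    omega
  rw [smrEntrySet, if_neg h2]
  have hd : ((m : ℤ)) * ((2 * s : ℕ) : ℤ) / 2 = (m : ℤ) * s := by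
    push_cast
    rw [show (m : ℤ) * (2 * (s : ℤ)) = 2 * ((m : ℤ) * s) by ring,
      Int.mul_ediv_cancel_left _ two_ne_zero]
  rw [hd, Finset.mem_erase, Finset.mem_Icc, abs_le]

lemma sum_comp_equiv {M : Type*} [AddCommMonoid M] {α β : Type*} [Fintype α] [Fintype β]
    (e : α ≃ β) (f : β → M) : ∑ j, f (e j) = ∑ c, f c :=
  Fintype.sum_equiv e _ _ (fun _ => rfl)
/-- If there exists an integer Heffter array `H(m, n; s, t)`, then there exists a
signed magic rectangle `SMR(m, 2n; 2s, t)` (obtained as `[A  -A]`). -/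
theorem smr_of_heffter_side_by_side (m n s t : ℕ)
    (h : ∃ A : Fin m → Fin n → Option ℤ, IsHeffter m n s t A) :
    ∃ B : Fin m → Fin (2 * n) → Option ℤ, IsSMR m (2 * n) (2 * s) t B := by
  obtain ⟨A, hr, hc, hrange, huniq, hrow, hcol⟩ := h
  let e : Fin (2 * n) ≃ Fin n ⊕ Fin n := (finCongr (two_mul n)).trans finSumFinEquiv.symm
  let B' : Fin m → Fin n ⊕ Fin n → Option ℤ :=
    fun i c => Sum.elim (fun k => A i k) (fun k => (A i k).map (fun z => -z)) c
  have hB'l : ∀ i k, B' i (Sum.inl k) = A i k := fun _ _ => rfl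
  have hB'r : ∀ i k, B' i (Sum.inr k) = (A i k).map (fun z => -z) := fun _ _ => rfl
  refine ⟨fun i j => B' i (e j), ?_, ?_, ?_, ?_, ?_, ?_⟩
  · -- row counts
    intro i
    rw [Finset.card_filter]
    rw [sum_comp_equiv e (fun c => if B' i c ≠ none then 1 else 0), Fintype.sum_sum_type]
    have h1 : (∑ k : Fin n, if B' i (Sum.inl k) ≠ none then 1 else 0) = s := by
      simp only [hB'l]
      rw [← Finset.card_filter]
      exact hr i
    have h2 : (∑ k : Fin n, if B' i (Sum.inr k) ≠ none then 1 else 0) = s := by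
      simp only [hB'r, ne_eq, Option.map_eq_none_iff]
      rw [← Finset.card_filter]
      exact hr i
    rw [h1, h2]; omega
  · -- column counts
    intro j
    rcases hj : e j with k | k
    · simp only [hj, hB'l]
      exact hc k
    · simp only [hj, hB'r, ne_eq, Option.map_eq_none_iff]
      exact hc k
  · -- range
    intro i j x hx
    replace hx : B' i (e j) = some x := hx
    rw [smr_mem_iff]
    rcases hj : e j with k | k
    · rw [hj, hB'l] at hx
      have := hrange i k x hx
      constructor
      · intro h0; rw [h0] at this; simp at this
      · exact this.2
    · rw [hj, hB'r, Option.map_eq_some_iff] at hx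
      obtain ⟨y, hy, hyx⟩ := hx
      have := hrange i k y hy
      subst hyx
      constructor
      · intro h0; rw [neg_eq_zero.mp h0] at this; simp at this
      · rw [abs_neg]; exact this.2
  · -- unique occurrence
    intro x hx
    rw [smr_mem_iff] at hx
    obtain ⟨hx0, hxle⟩ := hx
    have habs : 1 ≤ |x| := Int.one_le_abs hx0
    obtain ⟨p, hp, hpu⟩ := huniq |x| habs hxle
    have hiff : ∀ q : Fin m × Fin n,
        (A q.1 q.2 = some |x| ∨ A q.1 q.2 = some (-|x|)) ↔
        (A q.1 q.2 = some x ∨ A q.1 q.2 = some (-x)) := by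
      intro q
      rcases abs_cases x with ⟨h1, _⟩ | ⟨h1, _⟩ <;> rw [h1] <;> simp only [neg_neg] <;> tauto
    rw [hiff] at hp
    have hpu' : ∀ q : Fin m × Fin n,
        (A q.1 q.2 = some x ∨ A q.1 q.2 = some (-x)) → q = p := by
      intro q hq; exact hpu q ((hiff q).mpr hq)
    -- key uniqueness for B
    have hkey : ∀ q : Fin m × Fin (2 * n), B' q.1 (e q.2) = some x →
        (A p.1 p.2 = some x → q = (p.1, e.symm (Sum.inl p.2))) ∧
        (A p.1 p.2 = some (-x) → q = (p.1, e.symm (Sum.inr p.2))) := by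
      intro q hq
      rcases hj : e q.2 with k | k
      · rw [hj, hB'l] at hq
        have := hpu' (q.1, k) (Or.inl hq)
        have h1 : q.1 = p.1 := congrArg Prod.fst this
        have h2 : k = p.2 := congrArg Prod.snd this
        constructor
        · intro _
          refine Prod.ext h1 ?_
          show q.2 = e.symm (Sum.inl p.2)
          rw [← h2, ← hj, Equiv.symm_apply_apply]
        · intro hpx
          exfalso
          rw [h1, h2, hpx] at hq
          have : x = -x := (Option.some_injective ℤ hq).symm
          omega
      · rw [hj, hB'r, Option.map_eq_some_iff] at hq
        obtain ⟨y, hy, hyx⟩ := hq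
        have hy' : A q.1 k = some (-x) := by rw [hy, show y = -x by omega]
        have := hpu' (q.1, k) (Or.inr hy')
        have h1 : q.1 = p.1 := congrArg Prod.fst this
        have h2 : k = p.2 := congrArg Prod.snd this
        constructor
        · intro hpx
          exfalso
          rw [h1, h2, hpx] at hy'
          have : x = -x := Option.some_injective ℤ hy'
          omega
        · intro _
          refine Prod.ext h1 ?_
          show q.2 = e.symm (Sum.inr p.2)
          rw [← h2, ← hj, Equiv.symm_apply_apply]
    rcases hp with hp | hp
    · refine ⟨(p.1, e.symm (Sum.inl p.2)), ?_, ?_⟩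
      · show B' p.1 (e (e.symm (Sum.inl p.2))) = some x
        rw [Equiv.apply_symm_apply, hB'l]
        exact hp
      · intro q hq
        exact (hkey q hq).1 hp
    · refine ⟨(p.1, e.symm (Sum.inr p.2)), ?_, ?_⟩
      · show B' p.1 (e (e.symm (Sum.inr p.2))) = some x
        rw [Equiv.apply_symm_apply, hB'r, hp]
        simp
      · intro q hq
        exact (hkey q hq).2 hp
  · -- row sums
    intro i
    rw [sum_comp_equiv e (fun c => (B' i c).getD 0), Fintype.sum_sum_type]
    have h2 : (∑ k : Fin n, (B' i (Sum.inr k)).getD 0) = -∑ k : Fin n, (A i k).getD 0 := by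
      rw [← Finset.sum_neg_distrib]
      refine Finset.sum_congr rfl fun k _ => ?_
      rw [hB'r]
      cases A i k <;> simp
    simp only [hB'l] at *
    rw [h2, hrow i]
    simp [hrow i]
  · -- column sums
    intro j
    rcases hj : e j with k | k
    · simp only [hj, hB'l]
      exact hcol k
    · simp only [hj, hB'r]
      have : (∑ i : Fin m, ((A i k).map (fun z => -z)).getD 0) = -∑ i : Fin m, (A i k).getD 0 := by
        rw [← Finset.sum_neg_distrib]
        refine Finset.sum_congr rfl fun i _ => ?_
        cases A i k <;> simp
      rw [this, hcol k, neg_zero]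
end

section
/- If there exists an integer Heffter array H(m,n;s,t), then there exists a signed magic rectangle SMR(2m, 2n; s, t) (obtained as the block-diagonal array with blocks A and −A). -/
/-- The block-diagonal array with blocks `A` and `-A`, on sum-indexed rows/cols. -/
def blkArr {m n : ℕ} (A : Fin m → Fin n → Option ℤ) :
    (Fin m ⊕ Fin m) → (Fin n ⊕ Fin n) → Option ℤ
  | .inl i, .inl j => A i j
  | .inr i, .inr j => (A i j).map (fun x => -x)
  | .inl _, .inr _ => none
  | .inr _, .inl _ => none

lemma mem_smrEntrySet_two (m s : ℕ) (x : ℤ) :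
    x ∈ smrEntrySet (2 * m) s ↔ 1 ≤ |x| ∧ |x| ≤ (m : ℤ) * s := by
  unfold smrEntrySet
  have hmod : ¬ ((2 * m * s) % 2 = 1) := by
    have : 2 * m * s = 2 * (m * s) := by ring
    omega
  rw [if_neg hmod]
  have h2 : ((2 * m : ℕ) : ℤ) * s / 2 = (m : ℤ) * s := by
    push_cast
    rw [mul_assoc, Int.mul_ediv_cancel_left _ two_ne_zero]
  rw [h2]
  simp only [Finset.mem_erase, Finset.mem_Icc]
  rcases abs_cases x with ⟨h1, _⟩ | ⟨h1, _⟩ <;> rw [h1] <;> omega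

lemma card_filter_sum_type {α β : Type*} [Fintype α] [Fintype β]
    (p : α ⊕ β → Prop) [DecidablePred p] :
    (Finset.univ.filter p).card =
      (Finset.univ.filter fun a => p (.inl a)).card +
      (Finset.univ.filter fun b => p (.inr b)).card := by
  rw [Finset.card_filter, Finset.card_filter, Finset.card_filter, Fintype.sum_sum_type]

lemma getD_map_neg (o : Option ℤ) : (o.map (fun x => -x)).getD 0 = -(o.getD 0) := by
  cases o <;> simp

/-- Characterization of filled cells of the block-diagonal array. -/
lemma blkArr_eq_some {m n : ℕ} (A : Fin m → Fin n → Option ℤ)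
    (u : Fin m ⊕ Fin m) (v : Fin n ⊕ Fin n) (x : ℤ) :
    blkArr A u v = some x ↔
      (∃ a b, u = .inl a ∧ v = .inl b ∧ A a b = some x) ∨
      (∃ a b, u = .inr a ∧ v = .inr b ∧ A a b = some (-x)) := by
  cases u <;> cases v <;> simp only [blkArr] <;> simp [Option.map_eq_some_iff]
  constructor
  · rintro ⟨y, hy, rfl⟩; simpa using hy
  · intro h; exact ⟨-x, h, by ring⟩

/-- If there exists an integer Heffter array `H(m, n; s, t)`, then there exists a
signed magic rectangle `SMR(2m, 2n; s, t)` (obtained as the block-diagonal array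
with blocks `A` and `-A`). -/
theorem smr_of_heffter_block_diagonal (m n s t : ℕ)
    (h : ∃ A : Fin m → Fin n → Option ℤ, IsHeffter m n s t A) :
    ∃ B : Fin (2 * m) → Fin (2 * n) → Option ℤ, IsSMR (2 * m) (2 * n) s t B := by
  obtain ⟨A, hA1, hA2, hA3, hA4, hA5, hA6⟩ := h
  set eM : Fin (2 * m) ≃ Fin m ⊕ Fin m :=
    (finCongr (two_mul m)).trans finSumFinEquiv.symm with heM
  set eN : Fin (2 * n) ≃ Fin n ⊕ Fin n :=
    (finCongr (two_mul n)).trans finSumFinEquiv.symm with heN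
  refine ⟨fun i j => blkArr A (eM i) (eN j), ?_, ?_, ?_, ?_, ?_, ?_⟩
  · -- row counts
    intro i
    have key : (Finset.univ.filter fun u : Fin n ⊕ Fin n => blkArr A (eM i) u ≠ none).card
        = (Finset.univ.filter fun j : Fin (2 * n) => blkArr A (eM i) (eN j) ≠ none).card := by
      apply Finset.card_equiv eN.symm
      intro u
      simp
    rw [← key, card_filter_sum_type]
    rcases h1 : eM i with a | a
    · simp only [blkArr]
      simp only [ne_eq, not_true_eq_false, Finset.filter_false, Finset.card_empty, add_zero]
      exact hA1 a
    · simp only [blkArr]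
      simp only [ne_eq, not_true_eq_false, Finset.filter_false, Finset.card_empty, zero_add,
        Option.map_eq_none_iff]
      exact hA1 a
  · -- column counts
    intro j
    have key : (Finset.univ.filter fun u : Fin m ⊕ Fin m => blkArr A u (eN j) ≠ none).card
        = (Finset.univ.filter fun i : Fin (2 * m) => blkArr A (eM i) (eN j) ≠ none).card := by
      apply Finset.card_equiv eM.symm
      intro u
      simp
    rw [← key, card_filter_sum_type]
    rcases h1 : eN j with b | b
    · simp only [blkArr]
      simp only [ne_eq, not_true_eq_false, Finset.filter_false, Finset.card_empty, add_zero]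
      exact hA2 b
    · simp only [blkArr]
      simp only [ne_eq, not_true_eq_false, Finset.filter_false, Finset.card_empty, zero_add,
        Option.map_eq_none_iff]
      exact hA2 b
  · -- entries lie in the required set
    intro i j x hx
    rw [mem_smrEntrySet_two]
    replace hx : blkArr A (eM i) (eN j) = some x := hx
    rw [blkArr_eq_some] at hx
    rcases hx with ⟨a, b, _, _, hab⟩ | ⟨a, b, _, _, hab⟩
    · exact hA3 a b x hab
    · have := hA3 a b (-x) hab
      rwa [abs_neg] at this
  · -- each element of the entry set appears exactly once
    intro x hx
    rw [mem_smrEntrySet_two] at hx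
    have hxne : x ≠ -x := by
      rcases abs_cases x with ⟨h1, _⟩ | ⟨h1, _⟩ <;> omega
    have habs : ∃! p : Fin m × Fin n, A p.1 p.2 = some x ∨ A p.1 p.2 = some (-x) := by
      rcases le_or_gt 0 x with hx0 | hx0
      · exact hA4 x (by rcases abs_cases x with ⟨h1, _⟩ | ⟨h1, _⟩ <;> omega)
          (by rcases abs_cases x with ⟨h1, _⟩ | ⟨h1, _⟩ <;> omega)
      · have h := hA4 (-x) (by rcases abs_cases x with ⟨h1, _⟩ | ⟨h1, _⟩ <;> omega)
          (by rcases abs_cases x with ⟨h1, _⟩ | ⟨h1, _⟩ <;> omega)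
        simp only [neg_neg] at h
        obtain ⟨p, hp, hup⟩ := h
        exact ⟨p, hp.symm, fun q hq => hup q hq.symm⟩
    obtain ⟨p, hp, hup⟩ := habs
    rcases hp with hpx | hpn
    · refine ⟨(eM.symm (.inl p.1), eN.symm (.inl p.2)), ?_, ?_⟩
      · show blkArr A (eM (eM.symm (.inl p.1))) (eN (eN.symm (.inl p.2))) = some x
        simp only [Equiv.apply_symm_apply]
        simpa [blkArr] using hpx
      · rintro ⟨i, j⟩ hq
        replace hq : blkArr A (eM i) (eN j) = some x := hq
        rw [blkArr_eq_some] at hq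
        rcases hq with ⟨a, b, h1, h2, hab⟩ | ⟨a, b, h1, h2, hab⟩
        · have he : (a, b) = p := hup (a, b) (Or.inl hab)
          rw [← he]
          exact Prod.ext ((Equiv.eq_symm_apply eM).mpr h1) ((Equiv.eq_symm_apply eN).mpr h2)
        · have he : (a, b) = p := hup (a, b) (Or.inr hab)
          have hx2 : A a b = some x := by rw [← he] at hpx; exact hpx
          rw [hx2] at hab
          exact absurd (Option.some.inj hab) hxne
    · refine ⟨(eM.symm (.inr p.1), eN.symm (.inr p.2)), ?_, ?_⟩
      · show blkArr A (eM (eM.symm (.inr p.1))) (eN (eN.symm (.inr p.2))) = some x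
        simp only [Equiv.apply_symm_apply]
        simp only [blkArr, hpn, Option.map_some]
        rw [neg_neg]
      · rintro ⟨i, j⟩ hq
        replace hq : blkArr A (eM i) (eN j) = some x := hq
        rw [blkArr_eq_some] at hq
        rcases hq with ⟨a, b, h1, h2, hab⟩ | ⟨a, b, h1, h2, hab⟩
        · have he : (a, b) = p := hup (a, b) (Or.inl hab)
          have hx2 : A a b = some (-x) := by rw [← he] at hpn; exact hpn
          rw [hx2] at hab
          exact absurd (Option.some.inj hab).symm hxne
        · have he : (a, b) = p := hup (a, b) (Or.inr hab)
          rw [← he]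
          exact Prod.ext ((Equiv.eq_symm_apply eM).mpr h1) ((Equiv.eq_symm_apply eN).mpr h2)
  · -- row sums
    intro i
    rw [← Equiv.sum_comp eN.symm (fun j => (blkArr A (eM i) (eN j)).getD 0)]
    simp only [Equiv.apply_symm_apply]
    rw [Fintype.sum_sum_type]
    rcases h1 : eM i with a | a <;>
      simp [blkArr, getD_map_neg, Finset.sum_neg_distrib, hA5 a]
  · -- column sums
    intro j
    rw [← Equiv.sum_comp eM.symm (fun i => (blkArr A (eM i) (eN j)).getD 0)]
    simp only [Equiv.apply_symm_apply]
    rw [Fintype.sum_sum_type]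
    rcases h1 : eN j with b | b <;>
      simp [blkArr, getD_map_neg, Finset.sum_neg_distrib, hA6 b]
end
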